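/- arXiv:1502.01750 — 6 statements merged into one kernel-verified Lean document; each statement's English description precedes it below -/
import Mathlib

section
/- The function C(θ) = (2/sinh(2a)) · sinh(a√(2(1+cos θ)))/√(2(1+cos θ)), for θ ∈ [0,π] and a > 0, satisfies C(0) = 1 and lim_{θ↓0} (C(0) − C(θ))/θ² exists and is a strictly positive real number; i.e., C has fractal index 2. -/
open Real Set Filter

theorem my_sinh_lt_mul_cosh {x : ℝ} (hx : 0 < x) : Real.sinh x < x * Real.cosh x := by
  have hderiv : ∀ y : ℝ, HasDerivAt (fun t => t * Real.cosh t - Real.sinh t)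
      (y * Real.sinh y) y := by
    intro y
    have h1 : HasDerivAt (fun t : ℝ => t * Real.cosh t)
        (1 * Real.cosh y + y * Real.sinh y) y :=
      (hasDerivAt_id y).mul (Real.hasDerivAt_cosh y)
    have h2 := h1.sub (Real.hasDerivAt_sinh y)
    exact (h2 : HasDerivAt (fun t => t * Real.cosh t - Real.sinh t) _ y).congr_deriv (by ring)
  have hmono : StrictMonoOn (fun t => t * Real.cosh t - Real.sinh t) (Icc 0 x) := by
    apply strictMonoOn_of_deriv_pos (convex_Icc 0 x)
    · exact (Continuous.sub (continuous_id.mul Real.continuous_cosh) Real.continuous_sinh).continuousOn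
    · intro y hy
      rw [interior_Icc] at hy
      rw [(hderiv y).deriv]
      exact mul_pos hy.1 (Real.sinh_pos_iff.2 hy.1)
  have := hmono (left_mem_Icc.2 hx.le) (right_mem_Icc.2 hx.le) hx
  simp at this
  linarith

/-- The von Mises–Fisher correlation function
`C θ = (2/sinh(2a)) * sinh (a √(2(1+cos θ))) / √(2(1+cos θ))` on `[0,π)`,
extended continuously by `C π = 2a/sinh(2a)`,
satisfies `C 0 = 1` and has fractal index `2`: the limit of `(C 0 - C θ)/θ²`
as `θ ↓ 0` exists and is strictly positive. -/
theorem vonMisesFisher_fractal_index (a : ℝ) (ha : 0 < a)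
    (C : ℝ → ℝ)
    (hC : ∀ θ ∈ Ico (0:ℝ) π,
      C θ = (2 / Real.sinh (2 * a)) *
        (Real.sinh (a * Real.sqrt (2 * (1 + Real.cos θ))) / Real.sqrt (2 * (1 + Real.cos θ))))
    (hCpi : C π = 2 * a / Real.sinh (2 * a)) :
    C 0 = 1 ∧ ∃ b : ℝ, 0 < b ∧
      Tendsto (fun θ => (C 0 - C θ) / θ ^ 2) (nhdsWithin 0 (Ioi 0)) (nhds b) := by
  have hs2a : 0 < Real.sinh (2 * a) := Real.sinh_pos_iff.2 (by linarith)
  have hC0 : C 0 = 1 := by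
    rw [hC 0 ⟨le_refl 0, Real.pi_pos⟩]
    have h4 : (2:ℝ) * (1 + Real.cos 0) = 2 ^ 2 := by rw [Real.cos_zero]; norm_num
    rw [h4, Real.sqrt_sq (by norm_num : (0:ℝ) ≤ 2)]
    field_simp
  refine ⟨hC0, ?_⟩
  set d : ℝ := 2 * a * Real.cosh (2 * a) - Real.sinh (2 * a) with hd
  have hdpos : 0 < d := by
    have := my_sinh_lt_mul_cosh (x := 2 * a) (by linarith)
    rw [hd]; linarith
  refine ⟨d / (8 * Real.sinh (2 * a)), by positivity, ?_⟩
  set G : ℝ → ℝ := fun x => Real.sinh (2 * a * x) / x with hG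
  have hGd : HasDerivAt G d 1 := by
    have h0 : HasDerivAt (fun x : ℝ => 2 * a * x) (2 * a) 1 := by
      simpa using (hasDerivAt_id 1).const_mul (2 * a)
    have h1 : HasDerivAt (fun x : ℝ => Real.sinh (2 * a * x))
        (Real.cosh (2 * a * 1) * (2 * a)) 1 := h0.sinh
    have h2 := h1.div (hasDerivAt_id 1) one_ne_zero
    refine (h2 : HasDerivAt G _ 1).congr_deriv ?_
    simp only [id_eq, one_pow, div_one, mul_one]
    rw [hd]
    ring
  have hslope : Tendsto (slope G 1) (nhdsWithin 1 {(1:ℝ)}ᶜ) (nhds d) :=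
    hasDerivAt_iff_tendsto_slope.1 hGd
  have hIoo : Ioo (0:ℝ) π ∈ nhdsWithin (0:ℝ) (Ioi 0) :=
    Ioo_mem_nhdsGT_of_mem ⟨le_refl (0:ℝ), Real.pi_pos⟩
  have hcos : Tendsto (fun θ : ℝ => Real.cos (θ / 2)) (nhdsWithin 0 (Ioi 0))
      (nhdsWithin 1 {(1:ℝ)}ᶜ) := by
    apply tendsto_nhdsWithin_of_tendsto_nhds_of_eventually_within
    · have hcont : Continuous fun θ : ℝ => Real.cos (θ / 2) := by continuity
      have := (hcont.tendsto 0).mono_left (nhdsWithin_le_nhds (s := Ioi (0:ℝ)))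
      simpa using this
    · filter_upwards [hIoo] with θ hθ
      have hlt : Real.cos (θ / 2) < 1 := by
        have := Real.cos_lt_cos_of_nonneg_of_le_pi (x := 0) (y := θ / 2) le_rfl
          (by linarith [hθ.2, Real.pi_pos]) (by linarith [hθ.1])
        simpa using this
      exact ne_of_lt hlt
  have hA : Tendsto (fun θ => slope G 1 (Real.cos (θ / 2))) (nhdsWithin 0 (Ioi 0))
      (nhds d) := hslope.comp hcos
  have hsinq : Tendsto (fun θ : ℝ => Real.sin (θ / 4) / (θ / 4)) (nhdsWithin 0 (Ioi 0))
      (nhds 1) := by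
    have h0 : Tendsto (slope Real.sin 0) (nhdsWithin 0 {(0:ℝ)}ᶜ) (nhds 1) := by
      have := hasDerivAt_iff_tendsto_slope.1 (Real.hasDerivAt_sin 0)
      simpa using this
    have hdiv4 : Tendsto (fun θ : ℝ => θ / 4) (nhdsWithin 0 (Ioi 0))
        (nhdsWithin 0 {(0:ℝ)}ᶜ) := by
      apply tendsto_nhdsWithin_of_tendsto_nhds_of_eventually_within
      · have : Tendsto (fun θ : ℝ => θ / 4) (nhds 0) (nhds 0) := by
          simpa using (continuous_id.div_const (4:ℝ)).tendsto 0
        exact this.mono_left nhdsWithin_le_nhds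
      · filter_upwards [self_mem_nhdsWithin] with θ hθ
        have h4 : (0:ℝ) < θ := hθ
        simp only [Set.mem_compl_iff, Set.mem_singleton_iff]
        positivity
    refine (h0.comp hdiv4).congr fun θ => ?_
    simp [slope_def_field, Function.comp]
  -- the target function eventually equals the product
  have key : ∀ θ ∈ Ioo (0:ℝ) π,
      (C 0 - C θ) / θ ^ 2 =
        (1 / Real.sinh (2 * a)) * slope G 1 (Real.cos (θ / 2)) *
          (Real.sin (θ / 4) / (θ / 4)) ^ 2 / 8 := by
    intro θ hθ
    have hθpi : θ / 2 ∈ Ioo (-(π/2)) (π/2) :=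
      ⟨by nlinarith [Real.pi_pos, hθ.1], by linarith [hθ.2, Real.pi_pos]⟩
    have hcpos : 0 < Real.cos (θ / 2) := Real.cos_pos_of_mem_Ioo hθpi
    set c : ℝ := Real.cos (θ / 2) with hc
    have hclt : c < 1 := by
      have := Real.cos_lt_cos_of_nonneg_of_le_pi (x := 0) (y := θ / 2) le_rfl
        (by linarith [hθ.2, Real.pi_pos]) (by linarith [hθ.1])
      simpa [hc] using this
    set s : ℝ := Real.sin (θ / 4) with hs
    have hspos : 0 < s := by
      apply Real.sin_pos_of_pos_of_lt_pi
      · linarith [hθ.1]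
      · linarith [hθ.2, Real.pi_pos]
    have h1c : 1 - c = 2 * s ^ 2 := by
      have h := Real.sin_sq_eq_half_sub (θ / 4)
      rw [show (2:ℝ) * (θ / 4) = θ / 2 by ring] at h
      rw [hs, hc]
      linarith
    have hsqrt : Real.sqrt (2 * (1 + Real.cos θ)) = 2 * c := by
      have hhalf := Real.cos_sq (θ / 2)
      rw [show (2:ℝ) * (θ / 2) = θ by ring] at hhalf
      have : 2 * (1 + Real.cos θ) = (2 * c) ^ 2 := by
        rw [hc]; nlinarith [hhalf]
      rw [this, Real.sqrt_sq (by linarith)]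
    rw [hC θ ⟨hθ.1.le, hθ.2⟩, hC0, hsqrt]
    have hslope_val : slope G 1 c = (Real.sinh (2 * a * c) / c - Real.sinh (2 * a)) / (c - 1) := by
      simp [slope_def_field, hG]
    rw [hslope_val]
    have hθne : θ ≠ 0 := ne_of_gt hθ.1
    have hcne : c ≠ 0 := ne_of_gt hcpos
    have hc1 : c - 1 ≠ 0 := by linarith
    have hsne : s ≠ 0 := ne_of_gt hspos
    have hsinh_ne : Real.sinh (2 * a) ≠ 0 := ne_of_gt hs2a
    have harg : a * (2 * c) = 2 * a * c := by ring
    rw [harg]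
    have hc1' : c - 1 = -(2 * s ^ 2) := by linarith
    rw [hc1']
    field_simp
    ring
  have heq : (fun θ => (C 0 - C θ) / θ ^ 2) =ᶠ[nhdsWithin 0 (Ioi 0)]
      (fun θ => (1 / Real.sinh (2 * a)) * slope G 1 (Real.cos (θ / 2)) *
        (Real.sin (θ / 4) / (θ / 4)) ^ 2 / 8) := by
    filter_upwards [hIoo] with θ hθ using key θ hθ
  rw [tendsto_congr' heq]
  have hlim : Tendsto (fun θ => (1 / Real.sinh (2 * a)) * slope G 1 (Real.cos (θ / 2)) *
      (Real.sin (θ / 4) / (θ / 4)) ^ 2 / 8) (nhdsWithin 0 (Ioi 0))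
      (nhds ((1 / Real.sinh (2 * a)) * d * 1 ^ 2 / 8)) :=
    (((tendsto_const_nhds.mul hA).mul (hsinq.pow 2)).div_const 8)
  have hbval : (1 / Real.sinh (2 * a)) * d * 1 ^ 2 / 8 = d / (8 * Real.sinh (2 * a)) := by
    rw [one_pow, mul_one, one_div, inv_mul_eq_div, div_div, mul_comm (Real.sinh (2 * a)) 8]
  rw [← hbval]
  exact hlim
end

section
/- For r ∈ (0, π/2), the function C(θ) = (1/(π(1 − cos r))) · (π − arccos((cos θ − cos² r)/(1 − cos² r)) − 2 cos r · arccos(cot r · (1 − cos θ)/sin θ)) · 𝟙(θ ≤ 2r) on [0,π] satisfies lim_{θ↓0} (C(0) − C(θ))/θ = b for some constant b > 0; i.e., C has fractal index 1. -/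
open Real Set Filter

lemma aux_sin_div : Tendsto (fun x : ℝ => Real.sin x / x) (nhdsWithin 0 {0}ᶜ) (nhds 1) := by
  have h := hasDerivAt_iff_tendsto_slope.mp (Real.hasDerivAt_sin 0)
  simp only [Real.cos_zero] at h
  refine h.congr' ?_
  filter_upwards with x
  simp [slope_def_field, Real.sin_zero]

lemma aux_arcsin_div : Tendsto (fun x : ℝ => Real.arcsin x / x) (nhdsWithin 0 {0}ᶜ) (nhds 1) := by
  have h := hasDerivAt_iff_tendsto_slope.mp
    (Real.hasDerivAt_arcsin (by norm_num : (0:ℝ) ≠ -1) (by norm_num : (0:ℝ) ≠ 1))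
  norm_num at h
  refine h.congr' ?_
  filter_upwards with x
  simp [slope_def_field, Real.arcsin_zero]

lemma aux_cos_div : Tendsto (fun θ : ℝ => (1 - Real.cos θ) / θ ^ 2) (nhdsWithin 0 {0}ᶜ) (nhds (1/2)) := by
  have hhalf : Tendsto (fun θ : ℝ => θ / 2) (nhdsWithin 0 {0}ᶜ) (nhdsWithin 0 {0}ᶜ) := by
    apply tendsto_nhdsWithin_of_tendsto_nhds_of_eventually_within _
    · have : Tendsto (fun θ : ℝ => θ / 2) (nhds 0) (nhds (0 / 2)) :=
        (tendsto_id (α := ℝ)).div_const 2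
      simpa using this.mono_left nhdsWithin_le_nhds
    · filter_upwards [self_mem_nhdsWithin] with x hx
      exact div_ne_zero hx two_ne_zero
  have h := (aux_sin_div.comp hhalf)
  have h2 : Tendsto (fun θ : ℝ => (Real.sin (θ/2) / (θ/2))^2 * (1/2)) (nhdsWithin 0 {0}ᶜ) (nhds ((1:ℝ)^2 * (1/2))) :=
    (h.pow 2).mul_const _
  norm_num at h2
  refine h2.congr' ?_
  filter_upwards [self_mem_nhdsWithin] with θ (hθ : θ ≠ 0)
  have : Real.sin (θ/2) ^ 2 = 1/2 - Real.cos θ / 2 := by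
    have := Real.sin_sq_eq_half_sub (θ/2)
    rwa [mul_div_cancel₀] at this
    norm_num
  rw [div_pow, this]
  have hθ2 : θ^2 ≠ 0 := pow_ne_zero _ hθ
  field_simp

/-- The correlation function of the uniform kernel on a spherical cap of radius
`r ∈ (0, π/2)` has fractal index `1`: `(C 0 - C θ)/θ → b > 0` as `θ ↓ 0`. -/
theorem uniform_kernel_fractal_index (r : ℝ) (hr : r ∈ Ioo 0 (π / 2))
    (C : ℝ → ℝ) (hC0 : C 0 = 1)
    (hC : ∀ θ ∈ Ioc (0:ℝ) π,
      C θ = (1 / (π * (1 - Real.cos r))) *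
        ((π - Real.arccos ((Real.cos θ - Real.cos r ^ 2) / (1 - Real.cos r ^ 2))
          - 2 * Real.cos r *
              Real.arccos ((Real.cos r / Real.sin r) * ((1 - Real.cos θ) / Real.sin θ))) *
          (if θ ≤ 2 * r then 1 else 0))) :
    ∃ b : ℝ, 0 < b ∧
      Tendsto (fun θ => (C 0 - C θ) / θ) (nhdsWithin 0 (Ioi 0)) (nhds b) := by
  obtain ⟨hr0, hrπ⟩ := hr
  have hπ : (0:ℝ) < π := Real.pi_pos
  set c := Real.cos r with hcdef
  set s := Real.sin r with hsdef
  have hc : 0 < c := Real.cos_pos_of_mem_Ioo ⟨by linarith, hrπ⟩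
  have hs : 0 < s := Real.sin_pos_of_pos_of_lt_pi hr0 (by linarith)
  have hc1 : c < 1 := by
    have := Real.cos_lt_cos_of_nonneg_of_le_pi (le_refl 0) (by linarith) hr0
    simpa using this
  have hs2 : s^2 = 1 - c^2 := by
    rw [hsdef, hcdef, Real.sin_sq]
  have hK : π * (1 - c) ≠ 0 := by
    have h1 : (0:ℝ) < 1 - c := by linarith
    positivity
  set K : ℝ := 1 / (π * (1 - c)) with hKdef
  set A : ℝ → ℝ := fun θ => (Real.cos θ - c^2) / (1 - c^2) with hAdef
  set B : ℝ → ℝ := fun θ => (c/s) * ((1 - Real.cos θ) / Real.sin θ) with hBdef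
  set S : ℝ → ℝ := fun θ => Real.sqrt (1 - A θ^2) with hSdef
  have hmono : nhdsWithin (0:ℝ) (Ioi 0) ≤ nhdsWithin (0:ℝ) ({0}ᶜ) :=
    nhdsWithin_mono 0 (fun x hx => ne_of_gt hx)
  have hIoo : Ioo (0:ℝ) r ∈ nhdsWithin (0:ℝ) (Ioi 0) :=
    Ioo_mem_nhdsGT_of_mem ⟨le_refl 0, hr0⟩
  -- pointwise facts on Ioo 0 r
  have hfacts : ∀ θ ∈ Ioo (0:ℝ) r, 0 < Real.sin θ ∧ c < Real.cos θ ∧ Real.cos θ < 1 := by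
    intro θ hθ
    refine ⟨Real.sin_pos_of_pos_of_lt_pi hθ.1 (by linarith [hθ.2]), ?_, ?_⟩
    · exact Real.cos_lt_cos_of_nonneg_of_le_pi hθ.1.le (by linarith) hθ.2
    · simpa using Real.cos_lt_cos_of_nonneg_of_le_pi (le_refl 0) (by linarith [hθ.2]) hθ.1
  have hAbound : ∀ θ ∈ Ioo (0:ℝ) r, 0 < A θ ∧ A θ < 1 := by
    intro θ hθ
    obtain ⟨_, h1, h2⟩ := hfacts θ hθ
    have hd : (0:ℝ) < 1 - c^2 := by nlinarith
    constructor
    · apply div_pos _ hd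
      nlinarith
    · rw [div_lt_one hd]; nlinarith
  -- B θ / θ → c/(2s)
  have hBdiv : Tendsto (fun θ => B θ / θ) (nhdsWithin 0 (Ioi 0)) (nhds (c/(2*s))) := by
    have h := ((tendsto_const_nhds.mul (aux_cos_div.mono_left hmono)).mul
      ((aux_sin_div.mono_left hmono).inv₀ one_ne_zero) :
      Tendsto (fun θ : ℝ => (c/s) * ((1 - Real.cos θ)/θ^2) * (Real.sin θ/θ)⁻¹)
        (nhdsWithin 0 (Ioi 0)) (nhds ((c/s) * (1/2) * 1⁻¹)))
    have hval : (c/s) * (1/2) * (1:ℝ)⁻¹ = c/(2*s) := by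
      rw [inv_one, mul_one, div_mul_div_comm, mul_one, mul_comm s 2]
    rw [hval] at h
    refine h.congr' ?_
    filter_upwards [hIoo] with θ hθ
    obtain ⟨hsθ, _, _⟩ := hfacts θ hθ
    have hθ0 : θ ≠ 0 := ne_of_gt hθ.1
    rw [hBdef]
    field_simp
  have hB0 : Tendsto B (nhdsWithin 0 (Ioi 0)) (nhds 0) := by
    have h := hBdiv.mul (tendsto_id.mono_left nhdsWithin_le_nhds : Tendsto (fun θ : ℝ => θ) (nhdsWithin 0 (Ioi 0)) (nhds 0))
    rw [mul_zero] at h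
    refine h.congr' ?_
    filter_upwards [hIoo] with θ hθ
    field_simp [ne_of_gt hθ.1]; rfl
  have hBne : Tendsto B (nhdsWithin 0 (Ioi 0)) (nhdsWithin 0 ({0}ᶜ)) := by
    apply tendsto_nhdsWithin_of_tendsto_nhds_of_eventually_within _ hB0
    filter_upwards [hIoo] with θ hθ
    obtain ⟨hsθ, _, h2⟩ := hfacts θ hθ
    have : 0 < B θ := by
      have h1 : 0 < 1 - Real.cos θ := by linarith
      exact mul_pos (div_pos hc hs) (div_pos h1 hsθ)
    exact Set.mem_compl_singleton_iff.mpr (ne_of_gt this)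
  have harcsinB : Tendsto (fun θ => Real.arcsin (B θ) / θ) (nhdsWithin 0 (Ioi 0)) (nhds (c/(2*s))) := by
    have h := (aux_arcsin_div.comp hBne).mul hBdiv
    rw [one_mul] at h
    refine h.congr' ?_
    filter_upwards [hBne.eventually_mem self_mem_nhdsWithin, hIoo] with θ hBθ hθ
    have hBθ' : B θ ≠ 0 := Set.mem_compl_singleton_iff.mp hBθ
    have hθ0 : θ ≠ 0 := ne_of_gt hθ.1
    simp only [Function.comp]
    field_simp
  -- A tends to 1
  have hd2 : (0:ℝ) < 1 - c^2 := by nlinarith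
  have hA1 : Tendsto A (nhdsWithin 0 (Ioi 0)) (nhds 1) := by
    have h : Tendsto A (nhds 0) (nhds ((Real.cos 0 - c^2)/(1-c^2))) :=
      ((Real.continuous_cos.sub continuous_const).div_const _).tendsto 0
    rw [Real.cos_zero, div_self (ne_of_gt hd2)] at h
    exact h.mono_left nhdsWithin_le_nhds
  have h1A : Tendsto (fun θ => (1 - A θ^2)/θ^2) (nhdsWithin 0 (Ioi 0)) (nhds (1/s^2)) := by
    have h := (aux_cos_div.mono_left hmono).mul (((tendsto_const_nhds : Tendsto (fun _ : ℝ => (1:ℝ)) (nhdsWithin 0 (Ioi 0)) (nhds 1)).add hA1).div_const (s^2))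
    have hval : (1/2 : ℝ) * (((1:ℝ)+1)/s^2) = 1/s^2 := by ring
    rw [hval] at h
    refine h.congr' ?_
    filter_upwards [hIoo] with θ hθ
    have hθ0 : θ ≠ 0 := ne_of_gt hθ.1
    have h1mA : 1 - A θ = (1 - Real.cos θ)/s^2 := by
      show 1 - (Real.cos θ - c^2)/(1-c^2) = (1 - Real.cos θ)/s^2
      rw [hs2]
      field_simp
      ring
    have hfac : 1 - A θ^2 = (1-A θ)*(1+A θ) := by ring
    rw [hfac, h1mA]
    field_simp
  have hSdiv : Tendsto (fun θ => S θ / θ) (nhdsWithin 0 (Ioi 0)) (nhds (1/s)) := by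
    have h := (Real.continuous_sqrt.tendsto _).comp h1A
    have hv : Real.sqrt (1/s^2) = 1/s := by
      rw [show (1:ℝ)/s^2 = (1/s)^2 by ring, Real.sqrt_sq (by positivity)]
    rw [hv] at h
    refine h.congr' ?_
    filter_upwards [hIoo] with θ hθ
    obtain ⟨hA0, hA1'⟩ := hAbound θ hθ
    have h1 : (0:ℝ) ≤ 1 - A θ^2 := by nlinarith
    simp only [Function.comp]
    rw [Real.sqrt_div h1, Real.sqrt_sq hθ.1.le]
  have hS0 : Tendsto S (nhdsWithin 0 (Ioi 0)) (nhds 0) := by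
    have h := hSdiv.mul (tendsto_id.mono_left nhdsWithin_le_nhds :
      Tendsto (fun θ : ℝ => θ) (nhdsWithin 0 (Ioi 0)) (nhds 0))
    rw [mul_zero] at h
    refine h.congr' ?_
    filter_upwards [hIoo] with θ hθ
    field_simp [ne_of_gt hθ.1]; rfl
  have hSne : Tendsto S (nhdsWithin 0 (Ioi 0)) (nhdsWithin 0 ({0}ᶜ)) := by
    apply tendsto_nhdsWithin_of_tendsto_nhds_of_eventually_within _ hS0
    filter_upwards [hIoo] with θ hθ
    obtain ⟨hA0, hA1'⟩ := hAbound θ hθ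
    have h1 : (0:ℝ) < 1 - A θ^2 := by nlinarith
    exact Set.mem_compl_singleton_iff.mpr (ne_of_gt (Real.sqrt_pos.mpr h1))
  have harccosA : Tendsto (fun θ => Real.arccos (A θ) / θ) (nhdsWithin 0 (Ioi 0)) (nhds (1/s)) := by
    have h := (aux_arcsin_div.comp hSne).mul hSdiv
    rw [one_mul] at h
    refine h.congr' ?_
    filter_upwards [hSne.eventually_mem self_mem_nhdsWithin, hIoo] with θ hSθ hθ
    have hSθ' : S θ ≠ 0 := Set.mem_compl_singleton_iff.mp hSθ
    have hθ0 : θ ≠ 0 := ne_of_gt hθ.1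
    obtain ⟨hA0, _⟩ := hAbound θ hθ
    have harc : Real.arccos (A θ) = Real.arcsin (S θ) := Real.arccos_eq_arcsin hA0.le
    simp only [Function.comp]
    rw [harc]
    field_simp
  -- conclusion
  refine ⟨s/(π*(1-c)), by
    have h1 : (0:ℝ) < 1 - c := by linarith
    positivity, ?_⟩
  have h := (harccosA.const_mul K).sub (harcsinB.const_mul (2*c*K))
  have hval : K * (1/s) - 2*c*K * (c/(2*s)) = s/(π*(1-c)) := by
    rw [hKdef]
    have h1 : (1:ℝ) - c ≠ 0 := by intro h'; linarith [(by linarith : (0:ℝ) < 1 - c)]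
    field_simp
    linear_combination (-1) * hs2
  rw [hval] at h
  refine h.congr' ?_
  filter_upwards [hIoo] with θ hθ
  have hθπ : θ ≤ π := by linarith [hθ.2]
  have hle : θ ≤ 2*r := by linarith [hθ.2]
  have hθ0 : θ ≠ 0 := ne_of_gt hθ.1
  rw [hC0, hC θ ⟨hθ.1, hθπ⟩, if_pos hle, Real.arccos_eq_pi_div_two_sub_arcsin]
  show K * (Real.arccos (A θ) / θ) - 2*c*K * (Real.arcsin (B θ) / θ) =
    (1 - K * ((π - Real.arccos (A θ) - 2 * c * (π/2 - Real.arcsin (B θ))) * 1)) / θ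
  have hK1 : K * (π * (1 - c)) = 1 := by rw [hKdef]; field_simp; exact div_self (sub_ne_zero.mpr (ne_of_gt hc1))
  have hrw : 1 - K * ((π - Real.arccos (A θ) - 2 * c * (π/2 - Real.arcsin (B θ))) * 1)
      = K * (Real.arccos (A θ) - 2*c*Real.arcsin (B θ)) := by
    have h1c : (1:ℝ) - c ≠ 0 := sub_ne_zero.mpr (ne_of_gt hc1)
    rw [hKdef]
    field_simp
    ring
  rw [hrw]
  ring
end

section
/- For the uniform kernel k(θ) = 𝟙(θ ≤ π/2) on the sphere S², the associated isotropic correlation function is C(θ) = 1 − θ/π for θ ∈ [0,π]. -/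
open Real Set

open MeasureTheory intervalIntegral


lemma bddMeasInt {f : ℝ → ℝ} (hm : Measurable f) {C : ℝ} (hb : ∀ x, |f x| ≤ C) (a b : ℝ) :
    IntervalIntegrable f volume a b := by
  rw [intervalIntegrable_iff]
  exact Measure.integrableOn_of_bounded measure_Ioc_lt_top.ne hm.aestronglyMeasurable
    (Filter.Eventually.of_forall hb)

lemma indicator_cos_integral (b : ℝ) :
    (∫ φ in (0:ℝ)..π, (if b ≤ Real.cos φ then (1:ℝ) else 0)) = Real.arccos b := by
  rcases lt_or_ge 1 b with hb1 | hb1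
  · rw [intervalIntegral.integral_congr (g := fun _ => (0:ℝ))
      (fun φ _ => if_neg (by nlinarith [Real.cos_le_one φ]))]
    simp [Real.arccos_eq_zero.2 hb1.le]
  rcases lt_or_ge b (-1) with hb2 | hb2
  · rw [intervalIntegral.integral_congr (g := fun _ => (1:ℝ))
      (fun φ _ => if_pos (by nlinarith [Real.neg_one_le_cos φ]))]
    simp [Real.arccos_eq_pi.2 hb2.le]
  · set c := Real.arccos b with hc
    have hc0 : 0 ≤ c := Real.arccos_nonneg b
    have hcπ : c ≤ π := Real.arccos_le_pi b
    have key : ∀ φ ∈ Icc (0:ℝ) π,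
        (if b ≤ Real.cos φ then (1:ℝ) else 0) = (if φ ≤ c then (1:ℝ) else 0) := by
      intro φ hφ
      have : b ≤ Real.cos φ ↔ φ ≤ c := by
        rw [← Real.cos_arccos hb2 hb1, ← hc]
        exact Real.strictAntiOn_cos.le_iff_ge ⟨hc0, hcπ⟩ hφ
      simp only [this]
    have hmeas : Measurable fun φ : ℝ => (if φ ≤ c then (1:ℝ) else 0) :=
      Measurable.ite measurableSet_Iic measurable_const measurable_const
    have hbd : ∀ x : ℝ, |(if x ≤ c then (1:ℝ) else 0)| ≤ 1 := by
      intro x; split <;> simp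
    rw [intervalIntegral.integral_congr (g := fun φ => if φ ≤ c then (1:ℝ) else 0)
      (fun φ hφ => key φ (by rwa [Set.uIcc_of_le Real.pi_pos.le] at hφ))]
    rw [← intervalIntegral.integral_add_adjacent_intervals (b := c)
      (bddMeasInt hmeas hbd 0 c) (bddMeasInt hmeas hbd c π)]
    have h1 : (∫ φ in (0:ℝ)..c, (if φ ≤ c then (1:ℝ) else 0)) = c := by
      rw [intervalIntegral.integral_congr (g := fun _ => (1:ℝ))
        (fun φ hφ => if_pos (by rw [Set.uIcc_of_le hc0] at hφ; exact hφ.2))]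
      simp
    have h2 : (∫ φ in c..π, (if φ ≤ c then (1:ℝ) else 0)) = 0 := by
      rw [intervalIntegral.integral_congr_ae (g := fun _ => (0:ℝ))
        (Filter.Eventually.of_forall fun φ hφ => by
          rw [Set.uIoc_of_le hcπ] at hφ
          exact if_neg (not_le.2 hφ.1))]
      simp
    rw [h1, h2, add_zero]

noncomputable def Kf (θ η : ℝ) : ℝ :=
  Real.arccos (-(Real.cos θ * Real.cos η) / (Real.sin θ * Real.sin η)) * Real.sin η

lemma Kf_meas (θ : ℝ) : Measurable (Kf θ) := by
  apply Measurable.mul _ Real.continuous_sin.measurable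
  exact Real.continuous_arccos.measurable.comp
    (((continuous_const.mul Real.continuous_cos).measurable.neg).div
      (continuous_const.mul Real.continuous_sin).measurable)

lemma Kf_bdd (θ η : ℝ) : |Kf θ η| ≤ π := by
  rw [Kf, abs_mul]
  have h1 := Real.arccos_nonneg (-(Real.cos θ * Real.cos η) / (Real.sin θ * Real.sin η))
  have h2 := Real.arccos_le_pi (-(Real.cos θ * Real.cos η) / (Real.sin θ * Real.sin η))
  have h3 := abs_sin_le_one η
  calc |Real.arccos _| * |Real.sin η| ≤ π * 1 := by
        apply mul_le_mul _ h3 (abs_nonneg _) Real.pi_pos.le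
        rwa [abs_of_nonneg h1]
    _ = π := mul_one π

set_option maxHeartbeats 1000000 in
lemma Fderiv {θ η : ℝ} (hsθ : 0 < Real.sin θ) (hcθ : 0 < Real.cos θ)
    (hsη : 0 < Real.sin η) (hcη : 0 < Real.cos η) (hsc : Real.cos θ < Real.sin η)
    (hca : Real.cos θ * Real.cos η < Real.sin θ * Real.sin η) :
    HasDerivAt (fun η =>
      -Real.cos η * Real.arccos (-(Real.cos θ * Real.cos η) / (Real.sin θ * Real.sin η))
        + Real.arcsin (Real.cos θ / Real.sin η)) (Kf θ η) η := by
  have hden : (0:ℝ) < Real.sin θ * Real.sin η := mul_pos hsθ hsη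
  set b : ℝ := -(Real.cos θ * Real.cos η) / (Real.sin θ * Real.sin η) with hbdef
  have hb_gt : -1 < b := by rw [hbdef, lt_div_iff₀ hden]; nlinarith
  have hb_lt : b < 1 := by rw [hbdef, div_lt_one hden]; nlinarith
  set q : ℝ := Real.cos θ / Real.sin η with hqdef
  have hq_pos : 0 < q := div_pos hcθ hsη
  have hq_lt : q < 1 := (div_lt_one hsη).2 hsc
  have hw0 : (0:ℝ) < Real.sin η ^ 2 - Real.cos θ ^ 2 := by nlinarith
  set w : ℝ := Real.sqrt (Real.sin η ^ 2 - Real.cos θ ^ 2) with hwdef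
  have hw_pos : 0 < w := Real.sqrt_pos.2 hw0
  have hw_sq : w ^ 2 = Real.sin η ^ 2 - Real.cos θ ^ 2 := Real.sq_sqrt hw0.le
  have hw1 : Real.sqrt (1 - b ^ 2) = w / (Real.sin θ * Real.sin η) := by
    have key : (w / (Real.sin θ * Real.sin η)) ^ 2 = 1 - b ^ 2 := by
      rw [div_pow, hw_sq, hbdef, div_pow]
      field_simp
      linear_combination (-(Real.sin η ^ 2)) * Real.sin_sq_add_cos_sq θ
        + (Real.cos θ ^ 2) * Real.sin_sq_add_cos_sq η
    rw [← key, Real.sqrt_sq (by positivity)]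
  have hw2 : Real.sqrt (1 - q ^ 2) = w / Real.sin η := by
    have key : (w / Real.sin η) ^ 2 = 1 - q ^ 2 := by
      rw [div_pow, hw_sq, hqdef, div_pow]
      field_simp
    rw [← key, Real.sqrt_sq (by positivity)]
  have hb_deriv : HasDerivAt (fun η => -(Real.cos θ * Real.cos η) / (Real.sin θ * Real.sin η))
      (Real.cos θ / (Real.sin θ * Real.sin η ^ 2)) η := by
    have h1 : HasDerivAt (fun η => -(Real.cos θ * Real.cos η))
        (Real.cos θ * Real.sin η) η := by
      exact ((Real.hasDerivAt_cos η).const_mul (Real.cos θ)).neg.congr_deriv (by ring)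
    have h2 : HasDerivAt (fun η => Real.sin θ * Real.sin η)
        (Real.sin θ * Real.cos η) η := (Real.hasDerivAt_sin η).const_mul (Real.sin θ)
    have h3 := h1.div h2 (ne_of_gt hden)
    refine h3.congr_deriv ?_
    symm
    rw [div_eq_div_iff (by positivity) (by positivity)]
    linear_combination (-(Real.cos θ * Real.sin θ ^ 2 * Real.sin η ^ 2)) * Real.sin_sq_add_cos_sq η
  have hq_deriv : HasDerivAt (fun η => Real.cos θ / Real.sin η)
      (-(Real.cos θ * Real.cos η) / Real.sin η ^ 2) η := by
    have h3 := (hasDerivAt_const η (Real.cos θ)).div (Real.hasDerivAt_sin η) (ne_of_gt hsη)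
    exact h3.congr_deriv (by ring)
  have harccos : HasDerivAt (fun η => Real.arccos
      (-(Real.cos θ * Real.cos η) / (Real.sin θ * Real.sin η)))
      (-(1 / Real.sqrt (1 - b ^ 2)) * (Real.cos θ / (Real.sin θ * Real.sin η ^ 2))) η :=
    (Real.hasDerivAt_arccos (ne_of_gt hb_gt) (ne_of_lt hb_lt)).comp (h₂ := Real.arccos) η hb_deriv
  have harcsin : HasDerivAt (fun η => Real.arcsin (Real.cos θ / Real.sin η))
      (1 / Real.sqrt (1 - q ^ 2) * (-(Real.cos θ * Real.cos η) / Real.sin η ^ 2)) η :=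
    (Real.hasDerivAt_arcsin (ne_of_gt (by linarith)) (ne_of_lt hq_lt)).comp (h₂ := Real.arcsin) η hq_deriv
  have hneg_cos : HasDerivAt (fun η => -Real.cos η) (Real.sin η) η := by
    exact (Real.hasDerivAt_cos η).neg.congr_deriv (by ring)
  have htotal := (hneg_cos.mul harccos).add harcsin
  have hzero : -Real.cos η * (-(1 / Real.sqrt (1 - b ^ 2)) * (Real.cos θ / (Real.sin θ * Real.sin η ^ 2)))
      + 1 / Real.sqrt (1 - q ^ 2) * (-(Real.cos θ * Real.cos η) / Real.sin η ^ 2) = 0 := by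
    rw [hw1, hw2]
    field_simp
    ring
  have hval : Real.sin η * Real.arccos b
      + (-Real.cos η * (-(1 / Real.sqrt (1 - b ^ 2)) * (Real.cos θ / (Real.sin θ * Real.sin η ^ 2)))
        + 1 / Real.sqrt (1 - q ^ 2) * (-(Real.cos θ * Real.cos η) / Real.sin η ^ 2)) = Kf θ η := by
    rw [hzero, add_zero, Kf, ← hbdef, mul_comm]
  rw [← hval]
  refine htotal.congr_deriv ?_
  symm
  rw [mul_comm (Real.sin η) (Real.arccos b)]
  ring

set_option maxHeartbeats 1000000 in
lemma piece2 {θ : ℝ} (hθ : θ ∈ Ioo 0 (π/2)) :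
    ∫ η in (π/2 - θ)..(π/2), Kf θ η = π * Real.sin θ - θ := by
  obtain ⟨hθ0, hθ2⟩ := hθ
  have hsθ : 0 < Real.sin θ :=
    Real.sin_pos_of_pos_of_lt_pi hθ0 (hθ2.trans (by linarith [Real.pi_pos]))
  have hcθ : 0 < Real.cos θ := Real.cos_pos_of_mem_Ioo ⟨by linarith, hθ2⟩
  set F : ℝ → ℝ := fun η =>
    -Real.cos η * Real.arccos (-(Real.cos θ * Real.cos η) / (Real.sin θ * Real.sin η))
      + Real.arcsin (Real.cos θ / Real.sin η) with hF
  have hab : π/2 - θ ≤ π/2 := by linarith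
  have hcont : ContinuousOn F (Icc (π/2 - θ) (π/2)) := by
    have hsin_ne : ∀ η ∈ Icc (π/2 - θ) (π/2), Real.sin η ≠ 0 := by
      intro η hη
      exact ne_of_gt (Real.sin_pos_of_pos_of_lt_pi (by cases hη; linarith)
        (by cases hη; linarith [Real.pi_pos]))
    apply ContinuousOn.add
    · apply ContinuousOn.mul Real.continuous_cos.neg.continuousOn
      apply Real.continuous_arccos.comp_continuousOn
      apply ContinuousOn.div
        (continuous_const.mul Real.continuous_cos).neg.continuousOn
        (continuous_const.mul Real.continuous_sin).continuousOn
      intro η hη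
      exact mul_ne_zero (ne_of_gt hsθ) (hsin_ne η hη)
    · apply Real.continuous_arcsin.comp_continuousOn
      exact ContinuousOn.div continuousOn_const Real.continuous_sin.continuousOn hsin_ne
  have hderiv : ∀ η ∈ Ioo (π/2 - θ) (π/2), HasDerivAt F (Kf θ η) η := by
    intro η hη
    obtain ⟨hη1, hη2⟩ := hη
    have hη0 : 0 < η := by linarith
    have hsη : 0 < Real.sin η := Real.sin_pos_of_pos_of_lt_pi hη0 (by linarith [Real.pi_pos])
    have hcη : 0 < Real.cos η := Real.cos_pos_of_mem_Ioo ⟨by linarith, hη2⟩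
    have hsc : Real.cos θ < Real.sin η := by
      have := Real.strictMonoOn_sin (a := π/2 - θ) (b := η)
        ⟨by linarith, by linarith⟩ ⟨by linarith, hη2.le⟩ hη1
      rwa [Real.sin_pi_div_two_sub] at this
    have hca : Real.cos θ * Real.cos η < Real.sin θ * Real.sin η := by
      have hcos : Real.cos (θ + η) < 0 :=
        Real.cos_neg_of_pi_div_two_lt_of_lt (by linarith) (by linarith [Real.pi_pos])
      rw [Real.cos_add] at hcos
      linarith
    exact Fderiv hsθ hcθ hsη hcη hsc hca
  have hint : IntervalIntegrable (Kf θ) volume (π/2 - θ) (π/2) :=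
    bddMeasInt (Kf_meas θ) (Kf_bdd θ) _ _
  rw [intervalIntegral.integral_eq_sub_of_hasDerivAt_of_le hab hcont hderiv hint]
  have e1 : F (π/2) = π/2 - θ := by
    rw [hF]
    simp only [Real.cos_pi_div_two, Real.sin_pi_div_two, neg_zero, zero_mul, zero_add, div_one]
    rw [← Real.sin_pi_div_two_sub, Real.arcsin_sin (by linarith) (by linarith)]
  have e2 : F (π/2 - θ) = -(π * Real.sin θ) + π/2 := by
    rw [hF]
    simp only [Real.cos_pi_div_two_sub, Real.sin_pi_div_two_sub]
    rw [show -(Real.cos θ * Real.sin θ) / (Real.sin θ * Real.cos θ) = -1 by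
      rw [div_eq_iff (by positivity)]; ring]
    rw [Real.arccos_neg_one, div_self (ne_of_gt hcθ), Real.arcsin_one]
    ring
  rw [e1, e2]; ring

set_option maxHeartbeats 1000000 in
lemma ImainLow {θ : ℝ} (hθ0 : 0 < θ) (hle : θ ≤ π/2) :
    ∫ η in (0:ℝ)..(π/2), Kf θ η = π - θ := by
  rcases lt_or_eq_of_le hle with hlt | heq
  · -- θ ∈ (0, π/2)
    have hθπ : θ < π := by linarith [Real.pi_pos]
    have hsθ : 0 < Real.sin θ := Real.sin_pos_of_pos_of_lt_pi hθ0 hθπ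
    have hcθ : 0 < Real.cos θ := Real.cos_pos_of_mem_Ioo ⟨by linarith, hlt⟩
    have hsplit := intervalIntegral.integral_add_adjacent_intervals
      (bddMeasInt (Kf_meas θ) (Kf_bdd θ) 0 (π/2 - θ))
      (bddMeasInt (Kf_meas θ) (Kf_bdd θ) (π/2 - θ) (π/2))
    rw [← hsplit, piece2 ⟨hθ0, hlt⟩]
    have hp1 : ∫ η in (0:ℝ)..(π/2 - θ), Kf θ η = π * (1 - Real.sin θ) := by
      have hcongr : EqOn (Kf θ) (fun η => π * Real.sin η) (uIcc 0 (π/2 - θ)) := by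
        intro η hη
        rw [Set.uIcc_of_le (by linarith)] at hη
        obtain ⟨hη0, hη1⟩ := hη
        rcases eq_or_lt_of_le hη0 with h0 | h0
        · simp [Kf, ← h0]
        · have hsη : 0 < Real.sin η :=
            Real.sin_pos_of_pos_of_lt_pi h0 (by linarith [Real.pi_pos])
          have hden : (0:ℝ) < Real.sin θ * Real.sin η := mul_pos hsθ hsη
          have hcos : 0 ≤ Real.cos (θ + η) :=
            Real.cos_nonneg_of_mem_Icc ⟨by linarith [Real.pi_pos], by linarith⟩
          rw [Real.cos_add] at hcos
          have hb : -(Real.cos θ * Real.cos η) / (Real.sin θ * Real.sin η) ≤ -1 := by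
            rw [div_le_iff₀ hden]
            linarith
          rw [Kf, Real.arccos_eq_pi.2 hb]
      rw [intervalIntegral.integral_congr hcongr, intervalIntegral.integral_const_mul,
        integral_sin, Real.cos_zero, Real.cos_pi_div_two_sub]
    rw [hp1]; ring
  · -- θ = π/2
    subst heq
    have hcongr : EqOn (Kf (π/2)) (fun η => (π/2) * Real.sin η) (uIcc 0 (π/2)) := by
      intro η _
      simp [Kf, Real.cos_pi_div_two, Real.sin_pi_div_two, Real.arccos_zero]
    rw [intervalIntegral.integral_congr hcongr, intervalIntegral.integral_const_mul,
      integral_sin, Real.cos_zero, Real.cos_pi_div_two]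
    ring

set_option maxHeartbeats 1000000 in
lemma Imain {θ : ℝ} (hθ : θ ∈ Ioo 0 π) :
    ∫ η in (0:ℝ)..(π/2), Kf θ η = π - θ := by
  obtain ⟨hθ0, hθπ⟩ := hθ
  rcases le_or_gt θ (π/2) with hle | hgt
  · exact ImainLow hθ0 hle
  · have key : ∀ η, Kf θ η = π * Real.sin η - Kf (π - θ) η := by
      intro η
      rw [Kf, Kf, Real.cos_pi_sub, Real.sin_pi_sub, neg_mul, neg_neg, neg_div,
        Real.arccos_neg]
      ring
    rw [intervalIntegral.integral_congr (g := fun η => π * Real.sin η - Kf (π - θ) η)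
      (fun η _ => key η)]
    rw [intervalIntegral.integral_sub
      (Continuous.intervalIntegrable (u := fun η => π * Real.sin η) (continuous_const.mul Real.continuous_sin) 0 (π/2))
      (bddMeasInt (Kf_meas (π - θ)) (Kf_bdd (π - θ)) 0 (π/2))]
    rw [ImainLow (by linarith) (by linarith), intervalIntegral.integral_const_mul,
      integral_sin, Real.cos_zero, Real.cos_pi_div_two]
    ring

lemma inner_eval {θ η : ℝ} (h : 0 < Real.sin θ * Real.sin η) :
    (∫ φ in (0:ℝ)..π, (if Real.arccos (Real.sin θ * Real.sin η * Real.cos φ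
        + Real.cos θ * Real.cos η) ≤ π/2 then (1:ℝ) else 0))
    = Real.arccos (-(Real.cos θ * Real.cos η) / (Real.sin θ * Real.sin η)) := by
  rw [← indicator_cos_integral]
  apply intervalIntegral.integral_congr
  intro φ _
  apply if_congr _ rfl rfl
  rw [Real.arccos_le_pi_div_two, div_le_iff₀ h]
  constructor <;> intro <;> linarith

noncomputable def Gf (θ η : ℝ) : ℝ := if η ≤ π/2 then Kf θ η else 0

lemma Gf_meas (θ : ℝ) : Measurable (Gf θ) :=
  Measurable.ite measurableSet_Iic (Kf_meas θ) measurable_const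

lemma Gf_bdd (θ η : ℝ) : |Gf θ η| ≤ π := by
  rw [Gf]; split
  · exact Kf_bdd θ η
  · simpa using Real.pi_pos.le

set_option maxHeartbeats 1000000 in
lemma main_mid {θ : ℝ} (hθ : θ ∈ Ioo 0 π) :
    (∫ η in (0:ℝ)..π,
        ((if η ≤ π / 2 then (1:ℝ) else 0) *
          ∫ φ in (0:ℝ)..π,
            (if Real.arccos (Real.sin θ * Real.sin η * Real.cos φ + Real.cos θ * Real.cos η)
                ≤ π / 2 then (1:ℝ) else 0)) * Real.sin η)
      = π - θ := by
  obtain ⟨hθ0, hθπ⟩ := hθ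
  have hsθ : 0 < Real.sin θ := Real.sin_pos_of_pos_of_lt_pi hθ0 hθπ
  have hEq : EqOn (fun η =>
      ((if η ≤ π / 2 then (1:ℝ) else 0) *
          ∫ φ in (0:ℝ)..π,
            (if Real.arccos (Real.sin θ * Real.sin η * Real.cos φ + Real.cos θ * Real.cos η)
                ≤ π / 2 then (1:ℝ) else 0)) * Real.sin η) (Gf θ) (uIcc 0 π) := by
    intro η hη
    rw [Set.uIcc_of_le Real.pi_pos.le] at hη
    by_cases hle : η ≤ π/2
    · simp only [Gf, if_pos hle, one_mul]
      rcases eq_or_lt_of_le hη.1 with h0 | h0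
      · simp [Kf, ← h0]
      · have hsη : 0 < Real.sin η := Real.sin_pos_of_pos_of_lt_pi h0 (by linarith [Real.pi_pos])
        rw [inner_eval (mul_pos hsθ hsη), Kf]
    · simp [Gf, if_neg hle]
  rw [intervalIntegral.integral_congr hEq]
  rw [← intervalIntegral.integral_add_adjacent_intervals (b := π/2)
    (bddMeasInt (Gf_meas θ) (Gf_bdd θ) 0 (π/2))
    (bddMeasInt (Gf_meas θ) (Gf_bdd θ) (π/2) π)]
  have h1 : ∫ η in (0:ℝ)..(π/2), Gf θ η = π - θ := by
    rw [intervalIntegral.integral_congr (g := Kf θ) (fun η hη => by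
      rw [Set.uIcc_of_le (by positivity)] at hη
      exact if_pos hη.2)]
    exact Imain ⟨hθ0, hθπ⟩
  have h2 : ∫ η in (π/2:ℝ)..π, Gf θ η = 0 := by
    rw [intervalIntegral.integral_congr_ae (g := fun _ => (0:ℝ))
      (Filter.Eventually.of_forall fun η hη => by
        rw [Set.uIoc_of_le (by linarith [Real.pi_pos])] at hη
        exact if_neg (not_le.2 hη.1))]
    simp
  rw [h1, h2, add_zero]

set_option maxHeartbeats 1000000 in
lemma main_zero :
    (∫ η in (0:ℝ)..π,
        ((if η ≤ π / 2 then (1:ℝ) else 0) *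
          ∫ φ in (0:ℝ)..π,
            (if Real.arccos (Real.sin 0 * Real.sin η * Real.cos φ + Real.cos 0 * Real.cos η)
                ≤ π / 2 then (1:ℝ) else 0)) * Real.sin η)
      = π := by
  have hmeas : Measurable (fun η : ℝ => if η ≤ π/2 then π * Real.sin η else 0) :=
    Measurable.ite measurableSet_Iic (measurable_const.mul Real.continuous_sin.measurable)
      measurable_const
  have hbdd : ∀ η : ℝ, |if η ≤ π/2 then π * Real.sin η else 0| ≤ π := by
    intro η; split
    · rw [abs_mul, abs_of_nonneg Real.pi_pos.le]
      calc π * |Real.sin η| ≤ π * 1 := by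
            exact mul_le_mul_of_nonneg_left (abs_sin_le_one η) Real.pi_pos.le
        _ = π := mul_one π
    · simpa using Real.pi_pos.le
  have hEq : EqOn (fun η =>
      ((if η ≤ π / 2 then (1:ℝ) else 0) *
          ∫ φ in (0:ℝ)..π,
            (if Real.arccos (Real.sin 0 * Real.sin η * Real.cos φ + Real.cos 0 * Real.cos η)
                ≤ π / 2 then (1:ℝ) else 0)) * Real.sin η)
      (fun η => if η ≤ π/2 then π * Real.sin η else 0) (uIcc 0 π) := by
    intro η hη
    rw [Set.uIcc_of_le Real.pi_pos.le] at hη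
    by_cases hle : η ≤ π/2
    · simp only [if_pos hle, one_mul, Real.sin_zero, Real.cos_zero, zero_mul, one_mul, zero_add]
      have hc : 0 ≤ Real.cos η := Real.cos_nonneg_of_mem_Icc ⟨by linarith [hη.1], hle⟩
      rw [if_pos ((Real.arccos_le_pi_div_two).2 hc), intervalIntegral.integral_const]
      simp [mul_comm]
    · simp [if_neg hle]
  rw [intervalIntegral.integral_congr hEq]
  rw [← intervalIntegral.integral_add_adjacent_intervals (b := π/2)
    (bddMeasInt hmeas hbdd 0 (π/2)) (bddMeasInt hmeas hbdd (π/2) π)]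
  have h1 : (∫ η in (0:ℝ)..(π/2), if η ≤ π/2 then π * Real.sin η else 0) = π := by
    rw [intervalIntegral.integral_congr (g := fun η => π * Real.sin η) (fun η hη => by
      rw [Set.uIcc_of_le (by positivity)] at hη
      exact if_pos hη.2)]
    rw [intervalIntegral.integral_const_mul, integral_sin, Real.cos_zero, Real.cos_pi_div_two]
    ring
  have h2 : (∫ η in (π/2:ℝ)..π, if η ≤ π/2 then π * Real.sin η else 0) = 0 := by
    rw [intervalIntegral.integral_congr_ae (g := fun _ => (0:ℝ))
      (Filter.Eventually.of_forall fun η hη => by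
        rw [Set.uIoc_of_le (by linarith [Real.pi_pos])] at hη
        exact if_neg (not_le.2 hη.1))]
    simp
  rw [h1, h2, add_zero]

set_option maxHeartbeats 1000000 in
lemma main_pi :
    (∫ η in (0:ℝ)..π,
        ((if η ≤ π / 2 then (1:ℝ) else 0) *
          ∫ φ in (0:ℝ)..π,
            (if Real.arccos (Real.sin π * Real.sin η * Real.cos φ + Real.cos π * Real.cos η)
                ≤ π / 2 then (1:ℝ) else 0)) * Real.sin η)
      = 0 := by
  have hae : ∀ᵐ η : ℝ, η ≠ π / 2 := by
    rw [MeasureTheory.ae_iff]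
    simp only [not_not]
    rw [Set.setOf_eq_eq_singleton]
    exact Real.volume_singleton
  rw [intervalIntegral.integral_congr_ae (g := fun _ => (0:ℝ)) ?_]
  · simp
  · filter_upwards [hae] with η hne hmem
    rw [Set.uIoc_of_le Real.pi_pos.le] at hmem
    by_cases hle : η ≤ π/2
    · have hlt : η < π/2 := lt_of_le_of_ne hle hne
      have hc : 0 < Real.cos η := Real.cos_pos_of_mem_Ioo ⟨by linarith [hmem.1], hlt⟩
      simp only [Real.sin_pi, Real.cos_pi, zero_mul, zero_add, neg_mul]
      simp [Real.arccos_le_pi_div_two]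
      intro h _
      exact absurd h (not_le.2 hc)
    · simp [if_neg hle]

/-- For the uniform kernel `k θ = 𝟙(θ ≤ π/2)` on `S²`, the associated isotropic
correlation function `C(θ) = (2/c₂) ∫₀^π ∫₀^π k(η) k(arccos(sin θ sin η cos φ + cos θ cos η)) dφ sin η dη`
with `c₂ = 2π` equals `1 - θ/π` on `[0, π]`. -/
theorem uniform_kernel_correlation (θ : ℝ) (hθ : θ ∈ Icc (0:ℝ) π) :
    (2 / (2 * π)) *
      ∫ η in (0:ℝ)..π,
        ((if η ≤ π / 2 then (1:ℝ) else 0) *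
          ∫ φ in (0:ℝ)..π,
            (if Real.arccos (Real.sin θ * Real.sin η * Real.cos φ + Real.cos θ * Real.cos η)
                ≤ π / 2 then (1:ℝ) else 0)) * Real.sin η
      = 1 - θ / π := by
  
  have hπ : (π:ℝ) ≠ 0 := Real.pi_ne_zero
  obtain ⟨h0, hπ'⟩ := hθ
  rcases eq_or_lt_of_le h0 with h0' | h0'
  · subst h0'
    rw [main_zero]
    field_simp
    ring
  · rcases eq_or_lt_of_le hπ' with hπ'' | hπ''
    · subst hπ''
      rw [main_pi, mul_zero]
      field_simp
      ring
    · rw [main_mid ⟨h0', hπ''⟩]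
      field_simp
end

section
/- Let a(θ,y,φ) = arccos(sin θ sin y cos φ + cos θ cos y) and q ∈ (0,1). There is a constant C > 0 such that for all θ ∈ (0, θ₀] with θ₀ sufficiently small, all y ∈ [2θ, π − θ], and all φ ∈ [0,π], the remainder R(θ,y,φ) = a(θ,y,φ)^{−q} − y^{−q} − (q cos φ / y^{q+1}) θ satisfies |R(θ,y,φ)| ≤ C θ² (1/|y−θ|^{q+2} + 1/(|y−θ|^{q+1} sin(y−θ))). -/
open Real Set



lemma arccos_anti {x y : ℝ} (h : x ≤ y) : Real.arccos y ≤ Real.arccos x := by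
  unfold Real.arccos
  have := Real.monotone_arcsin h
  linarith

lemma sin_min_le {u v x : ℝ} (hu : 0 ≤ u) (hv : v ≤ π) (h1 : u ≤ x) (h2 : x ≤ v) :
    min (Real.sin u) (Real.sin v) ≤ Real.sin x := by
  rcases le_or_gt x (π / 2) with hx | hx
  · refine le_trans (min_le_left _ _) ?_
    have := Real.strictMonoOn_sin.monotoneOn (a := u) (b := x)
      ⟨by linarith [Real.pi_pos], by linarith⟩ ⟨by linarith [Real.pi_pos], hx⟩ h1
    exact this
  · refine le_trans (min_le_right _ _) ?_
    rw [← Real.sin_pi_sub v, ← Real.sin_pi_sub x]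
    exact Real.strictMonoOn_sin.monotoneOn
      ⟨by linarith [Real.pi_pos], by linarith⟩ ⟨by linarith [Real.pi_pos], by linarith⟩
      (by linarith)

lemma taylor2 {f f1 f2 : ℝ → ℝ} {θ M : ℝ} (hθ : 0 ≤ θ)
    (hd1 : ∀ s ∈ Icc (0:ℝ) θ, HasDerivAt f (f1 s) s)
    (hd2 : ∀ s ∈ Icc (0:ℝ) θ, HasDerivAt f1 (f2 s) s)
    (hM : ∀ s ∈ Icc (0:ℝ) θ, |f2 s| ≤ M) :
    |f θ - f 0 - f1 0 * θ| ≤ M * θ ^ 2 := by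
  have h0 : (0:ℝ) ∈ Icc (0:ℝ) θ := ⟨le_refl _, hθ⟩
  have hθmem : θ ∈ Icc (0:ℝ) θ := ⟨hθ, le_refl _⟩
  have hconv : Convex ℝ (Icc (0:ℝ) θ) := convex_Icc _ _
  have step1 : ∀ s ∈ Icc (0:ℝ) θ, |f1 s - f1 0| ≤ M * θ := by
    intro s hs
    have := hconv.norm_image_sub_le_of_norm_hasDerivWithin_le
      (f := f1) (f' := f2) (fun x hx => (hd2 x hx).hasDerivWithinAt)
      (fun x hx => by rw [Real.norm_eq_abs]; exact hM x hx) h0 hs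
    rw [Real.norm_eq_abs, Real.norm_eq_abs, sub_zero] at this
    have hsabs : |s| ≤ θ := by rw [abs_of_nonneg hs.1]; exact hs.2
    have hM0 : 0 ≤ M := le_trans (abs_nonneg _) (hM 0 h0)
    calc |f1 s - f1 0| ≤ M * |s| := this
      _ ≤ M * θ := by nlinarith
  set g : ℝ → ℝ := fun s => f s - f1 0 * s with hg
  have hg' : ∀ s ∈ Icc (0:ℝ) θ, HasDerivWithinAt g (f1 s - f1 0) (Icc (0:ℝ) θ) s := by
    intro s hs
    have : HasDerivAt g (f1 s - f1 0) s := by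
      exact ((hd1 s hs).sub ((hasDerivAt_id s).const_mul (f1 0))).congr_deriv (by ring)
    exact this.hasDerivWithinAt
  have := hconv.norm_image_sub_le_of_norm_hasDerivWithin_le
    (f := g) (f' := fun s => f1 s - f1 0) hg'
    (fun x hx => by rw [Real.norm_eq_abs]; exact step1 x hx) h0 hθmem
  rw [Real.norm_eq_abs, Real.norm_eq_abs, sub_zero, abs_of_nonneg hθ] at this
  have : |f θ - f1 0 * θ - f 0| ≤ M * θ * θ := by simpa [hg] using this
  calc |f θ - f 0 - f1 0 * θ| = |f θ - f1 0 * θ - f 0| := by ring_nf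
    _ ≤ M * θ * θ := this
    _ = M * θ ^ 2 := by ring


noncomputable def aT (y c s : ℝ) : ℝ := Real.sin s * Real.sin y * c + Real.cos s * Real.cos y
noncomputable def aT' (y c s : ℝ) : ℝ := Real.cos s * Real.sin y * c - Real.sin s * Real.cos y
noncomputable def aA (y c s : ℝ) : ℝ := Real.arccos (aT y c s)
noncomputable def aU (y c s : ℝ) : ℝ := Real.sqrt (1 - (aT y c s) ^ 2)
noncomputable def aF (q y c : ℝ) : ℝ → ℝ := fun s => (aA y c s) ^ (-q)
noncomputable def aF1 (q y c : ℝ) : ℝ → ℝ := fun s =>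
  q * aT' y c s * (aA y c s) ^ (-q - 1) / aU y c s
noncomputable def aF2 (q y c : ℝ) : ℝ → ℝ := fun s =>
  q * (-(aT y c s) * (aA y c s) ^ (-q - 1) / aU y c s
    + (q + 1) * (aT' y c s) ^ 2 * (aA y c s) ^ (-q - 2) / (aU y c s) ^ 2
    + aT y c s * (aT' y c s) ^ 2 * (aA y c s) ^ (-q - 1) / (aU y c s) ^ 3)

lemma hasDerivAt_aT (y c s : ℝ) : HasDerivAt (aT y c) (aT' y c s) s := by
  have h1 : HasDerivAt (fun s => Real.sin s * Real.sin y * c) (Real.cos s * Real.sin y * c) s :=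
    ((Real.hasDerivAt_sin s).mul_const (Real.sin y)).mul_const c
  have h2 : HasDerivAt (fun s => Real.cos s * Real.cos y) (-Real.sin s * Real.cos y) s :=
    (Real.hasDerivAt_cos s).mul_const (Real.cos y)
  have := h1.add h2
  exact this.congr_deriv (by unfold aT'; ring)

lemma hasDerivAt_aT' (y c s : ℝ) : HasDerivAt (aT' y c) (-(aT y c s)) s := by
  have h1 : HasDerivAt (fun s => Real.cos s * Real.sin y * c) (-Real.sin s * Real.sin y * c) s :=
    ((Real.hasDerivAt_cos s).mul_const (Real.sin y)).mul_const c
  have h2 : HasDerivAt (fun s => Real.sin s * Real.cos y) (Real.cos s * Real.cos y) s :=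
    (Real.hasDerivAt_sin s).mul_const (Real.cos y)
  have h3 := h1.sub h2
  have he : -Real.sin s * Real.sin y * c - Real.cos s * Real.cos y = -(aT y c s) := by
    unfold aT; ring
  rw [he] at h3
  exact h3

lemma aU_sq {y c s : ℝ} (h : 0 < aU y c s) : (aU y c s) ^ 2 = 1 - (aT y c s) ^ 2 := by
  have : 0 < 1 - (aT y c s) ^ 2 := Real.sqrt_pos.mp h
  exact Real.sq_sqrt this.le

lemma t_ne (y c s : ℝ) (h : 0 < aU y c s) : aT y c s ≠ -1 ∧ aT y c s ≠ 1 := by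
  have h2 : 0 < 1 - (aT y c s) ^ 2 := Real.sqrt_pos.mp h
  constructor <;> intro he <;> rw [he] at h2 <;> norm_num at h2

lemma hasDerivAt_aA {y c s : ℝ} (h : 0 < aU y c s) :
    HasDerivAt (aA y c) (-(1 / aU y c s) * aT' y c s) s := by
  obtain ⟨h1, h2⟩ := t_ne y c s h
  exact (Real.hasDerivAt_arccos h1 h2).comp s (hasDerivAt_aT y c s)

lemma hasDerivAt_aF {q y c s : ℝ} (h : 0 < aU y c s) (hA : 0 < aA y c s) :
    HasDerivAt (aF q y c) (aF1 q y c s) s := by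
  have hr : HasDerivAt (fun x : ℝ => x ^ (-q)) (-q * (aA y c s) ^ (-q - 1)) (aA y c s) :=
    Real.hasDerivAt_rpow_const (Or.inl hA.ne')
  have h3 := hr.comp s (hasDerivAt_aA h)
  have he : -q * (aA y c s) ^ (-q - 1) * (-(1 / aU y c s) * aT' y c s) = aF1 q y c s := by
    unfold aF1
    field_simp
  rw [he] at h3
  exact h3

lemma hasDerivAt_aU {y c s : ℝ} (h : 0 < aU y c s) :
    HasDerivAt (aU y c) (-(aT y c s * aT' y c s) / aU y c s) s := by
  have harg : HasDerivAt (fun s => 1 - (aT y c s) ^ 2) (-(2 * aT y c s * aT' y c s)) s := by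
    have := ((hasDerivAt_aT y c s).pow 2).const_sub 1
    simpa using this
  have hne : 1 - (aT y c s) ^ 2 ≠ 0 := (Real.sqrt_pos.mp h).ne'
  have h3 := (Real.hasDerivAt_sqrt hne).comp s harg
  have he : 1 / (2 * Real.sqrt (1 - aT y c s ^ 2)) * -(2 * aT y c s * aT' y c s)
      = -(aT y c s * aT' y c s) / aU y c s := by
    unfold aU at h ⊢
    field_simp
  rw [he] at h3
  exact h3

lemma hasDerivAt_aF1 {q y c s : ℝ} (h : 0 < aU y c s) (hA : 0 < aA y c s) :
    HasDerivAt (aF1 q y c) (aF2 q y c s) s := by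
  have hApow : HasDerivAt (fun s => (aA y c s) ^ (-q - 1))
      ((-q - 1) * (aA y c s) ^ (-q - 2) * (-(1 / aU y c s) * aT' y c s)) s := by
    have hr : HasDerivAt (fun x : ℝ => x ^ (-q - 1)) ((-q - 1) * (aA y c s) ^ (-q - 1 - 1))
        (aA y c s) := Real.hasDerivAt_rpow_const (Or.inl hA.ne')
    have := hr.comp s (hasDerivAt_aA h)
    have he : (-q - 1 - 1 : ℝ) = -q - 2 := by ring
    rw [he] at this
    exact this
  have hnum : HasDerivAt (fun s => q * aT' y c s * (aA y c s) ^ (-q - 1))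
      (q * (-(aT y c s)) * (aA y c s) ^ (-q - 1)
        + q * aT' y c s * ((-q - 1) * (aA y c s) ^ (-q - 2) * (-(1 / aU y c s) * aT' y c s))) s :=
    ((hasDerivAt_aT' y c s).const_mul q).mul hApow
  have := hnum.div (hasDerivAt_aU h) h.ne'
  have he : ((q * (-(aT y c s)) * (aA y c s) ^ (-q - 1)
        + q * aT' y c s * ((-q - 1) * (aA y c s) ^ (-q - 2) * (-(1 / aU y c s) * aT' y c s)))
          * aU y c s
        - q * aT' y c s * (aA y c s) ^ (-q - 1) * (-(aT y c s * aT' y c s) / aU y c s))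
        / (aU y c s) ^ 2 = aF2 q y c s := by
    unfold aF2
    field_simp
    ring
  rw [he] at this
  exact this

lemma tsq_identity (y c s : ℝ) :
    (aT y c s) ^ 2 + (aT' y c s) ^ 2 = Real.cos y ^ 2 + Real.sin y ^ 2 * c ^ 2 := by
  unfold aT aT'
  linear_combination (Real.sin_sq_add_cos_sq s) * (Real.sin y ^ 2 * c ^ 2 + Real.cos y ^ 2)

lemma tsq_bound (y c s : ℝ) (hc : c ^ 2 ≤ 1) :
    (aT y c s) ^ 2 + (aT' y c s) ^ 2 ≤ 1 := by
  rw [tsq_identity]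
  nlinarith [Real.sin_sq_add_cos_sq y, sq_nonneg (Real.sin y)]

lemma aF1_bound {q y c s : ℝ} (hq : 0 < q) (hu : 0 < aU y c s) (hA : 0 < aA y c s)
    (ht' : (aT' y c s) ^ 2 ≤ (aU y c s) ^ 2) :
    |aF1 q y c s| ≤ q * (aA y c s) ^ (-q - 1) := by
  set t' := aT' y c s
  set u := aU y c s
  set P1 := (aA y c s) ^ (-q - 1) with hP1def
  have hP1 : 0 < P1 := Real.rpow_pos_of_pos hA _
  have habs : |aF1 q y c s| = q * |t'| * P1 / u := by
    show |q * t' * P1 / u| = _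
    rw [abs_div, abs_mul, abs_mul, abs_of_pos hq, abs_of_pos hP1, abs_of_pos hu]
  rw [habs, div_le_iff₀ hu]
  have ht'u : |t'| ≤ u := by
    have h1 := Real.sqrt_le_sqrt ht'
    rwa [Real.sqrt_sq_eq_abs, Real.sqrt_sq hu.le] at h1
  nlinarith [mul_nonneg (mul_nonneg hq.le hP1.le) (sub_nonneg.mpr ht'u)]

lemma aF2_bound {q y c s : ℝ} (hq : 0 < q) (hu : 0 < aU y c s) (hA : 0 < aA y c s)
    (ht : |aT y c s| ≤ 1) (ht' : (aT' y c s) ^ 2 ≤ (aU y c s) ^ 2) :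
    |aF2 q y c s| ≤ q * (q + 1) * (aA y c s) ^ (-q - 2)
      + 2 * q * (aA y c s) ^ (-q - 1) / aU y c s := by
  set t := aT y c s
  set t' := aT' y c s
  set u := aU y c s
  set P1 := (aA y c s) ^ (-q - 1) with hP1def
  set P2 := (aA y c s) ^ (-q - 2) with hP2def
  have hP1 : 0 < P1 := Real.rpow_pos_of_pos hA _
  have hP2 : 0 < P2 := Real.rpow_pos_of_pos hA _
  have b1 : |(-t * P1 / u)| ≤ P1 / u := by
    rw [abs_div, abs_mul, abs_neg, abs_of_pos hP1, abs_of_pos hu]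
    exact (div_le_div_iff_of_pos_right hu).mpr (by nlinarith [abs_nonneg t])
  have b2 : |((q + 1) * t' ^ 2 * P2 / u ^ 2)| ≤ (q + 1) * P2 := by
    rw [abs_of_nonneg (by positivity)]
    rw [div_le_iff₀ (by positivity)]
    nlinarith [mul_nonneg (mul_nonneg (show (0:ℝ) ≤ q + 1 by linarith) hP2.le)
      (sub_nonneg.mpr ht')]
  have b3 : |(t * t' ^ 2 * P1 / u ^ 3)| ≤ P1 / u := by
    rw [abs_div, abs_mul, abs_mul, abs_of_nonneg (sq_nonneg t'), abs_of_pos hP1,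
      abs_of_pos (show (0:ℝ) < u ^ 3 by positivity)]
    rw [div_le_div_iff₀ (by positivity) hu]
    have h1 : |t| * t' ^ 2 * P1 * u ≤ t' ^ 2 * P1 * u := by
      nlinarith [mul_nonneg (mul_nonneg (sq_nonneg t') hP1.le) hu.le, abs_nonneg t]
    have h2 : t' ^ 2 * P1 * u ≤ u ^ 2 * P1 * u := by
      nlinarith [mul_nonneg hP1.le hu.le, sub_nonneg.mpr ht']
    nlinarith
  have habs : |aF2 q y c s| = q * |(-t * P1 / u) + ((q + 1) * t' ^ 2 * P2 / u ^ 2)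
      + (t * t' ^ 2 * P1 / u ^ 3)| := by
    show |q * (-t * P1 / u + (q + 1) * t' ^ 2 * P2 / u ^ 2 + t * t' ^ 2 * P1 / u ^ 3)| = _
    rw [abs_mul, abs_of_pos hq]
  rw [habs]
  have htri := (abs_add_le (-t * P1 / u + (q + 1) * t' ^ 2 * P2 / u ^ 2) (t * t' ^ 2 * P1 / u ^ 3))
  have htri2 := (abs_add_le (-t * P1 / u) ((q + 1) * t' ^ 2 * P2 / u ^ 2))
  have : |(-t * P1 / u) + ((q + 1) * t' ^ 2 * P2 / u ^ 2) + (t * t' ^ 2 * P1 / u ^ 3)|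
      ≤ (q + 1) * P2 + 2 * P1 / u := by
    calc _ ≤ |(-t * P1 / u) + ((q + 1) * t' ^ 2 * P2 / u ^ 2)| + |(t * t' ^ 2 * P1 / u ^ 3)| := htri
      _ ≤ |(-t * P1 / u)| + |((q + 1) * t' ^ 2 * P2 / u ^ 2)| + |(t * t' ^ 2 * P1 / u ^ 3)| := by
          linarith
      _ ≤ P1 / u + (q + 1) * P2 + P1 / u := by linarith
      _ = (q + 1) * P2 + 2 * P1 / u := by ring
  calc q * |(-t * P1 / u) + ((q + 1) * t' ^ 2 * P2 / u ^ 2) + (t * t' ^ 2 * P1 / u ^ 3)|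
      ≤ q * ((q + 1) * P2 + 2 * P1 / u) := mul_le_mul_of_nonneg_left this hq.le
    _ = q * (q + 1) * P2 + 2 * q * P1 / u := by ring

lemma aU_eq_sin (y c s : ℝ) : aU y c s = Real.sin (aA y c s) := by
  unfold aU aA; rw [Real.sin_arccos]

lemma aA_bounds {θ y c s : ℝ} (hθ0 : 0 < θ) (hy1 : 2*θ ≤ y) (hy2 : y ≤ π - θ)
    (hc1 : -1 ≤ c) (hc2 : c ≤ 1) (hs0 : 0 ≤ s) (hsθ : s ≤ θ) :
    y - s ≤ aA y c s ∧ aA y c s ≤ y + s := by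
  have hπ := Real.pi_gt_three
  have hsy : 0 ≤ Real.sin y := Real.sin_nonneg_of_nonneg_of_le_pi (by linarith) (by linarith)
  have hss : 0 ≤ Real.sin s := Real.sin_nonneg_of_nonneg_of_le_pi hs0 (by linarith)
  constructor
  · have h1 : aT y c s ≤ Real.cos (y - s) := by
      rw [Real.cos_sub]; unfold aT
      nlinarith [mul_nonneg (mul_nonneg hsy hss) (sub_nonneg.mpr hc2)]
    have h2 := arccos_anti h1
    rwa [Real.arccos_cos (by linarith) (by linarith)] at h2
  · have h1 : Real.cos (y + s) ≤ aT y c s := by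
      rw [Real.cos_add]; unfold aT
      nlinarith [mul_nonneg (mul_nonneg hsy hss) (by linarith : (0:ℝ) ≤ c + 1)]
    have h2 := arccos_anti h1
    rwa [Real.arccos_cos (by linarith) (by linarith)] at h2

set_option maxHeartbeats 4000000 in
/-- With `a(θ,y,φ) = arccos (sin θ sin y cos φ + cos θ cos y)` and `q ∈ (0,1)`,
there are constants `C > 0` and `θ₀ > 0` such that for all `θ ∈ (0,θ₀]`,
`y ∈ [2θ, π−θ]` and `φ ∈ [0,π]`, the Taylor remainder
`R(θ,y,φ) = a(θ,y,φ)^{−q} − y^{−q} − (q cos φ / y^{q+1}) θ` satisfies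
`|R| ≤ C θ² (|y−θ|^{−(q+2)} + |y−θ|^{−(q+1)} / sin (y−θ))`. -/
theorem arccos_power_taylor_remainder (q : ℝ) (hq : q ∈ Ioo (0:ℝ) 1) :
    ∃ C : ℝ, 0 < C ∧ ∃ θ₀ : ℝ, 0 < θ₀ ∧
      ∀ θ ∈ Ioc (0:ℝ) θ₀, ∀ y ∈ Icc (2 * θ) (π - θ), ∀ φ ∈ Icc (0:ℝ) π,
        |(Real.arccos (Real.sin θ * Real.sin y * Real.cos φ + Real.cos θ * Real.cos y)) ^ (-q)
            - y ^ (-q) - (q * Real.cos φ / y ^ (q + 1)) * θ|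
          ≤ C * θ ^ 2 *
              (1 / |y - θ| ^ (q + 2) + 1 / (|y - θ| ^ (q + 1) * Real.sin (y - θ))) := by
  obtain ⟨hq0, hq1⟩ := hq
  refine ⟨12, by norm_num, 1/2, by norm_num, ?_⟩
  rintro θ ⟨hθ0, hθh⟩ y ⟨hy1, hy2⟩ φ ⟨hφ0, hφπ⟩
  have hπ3 := Real.pi_gt_three
  have hπ4 := Real.pi_le_four
  set c := Real.cos φ with hcdef
  have hc1 : -1 ≤ c := Real.neg_one_le_cos φ
  have hc2 : c ≤ 1 := Real.cos_le_one φ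
  have hcsq : c ^ 2 ≤ 1 := by nlinarith
  have hy0 : 0 < y := by linarith
  have hyπ : y < π := by linarith
  have h0yθ : 0 < y - θ := by linarith
  have hyθπ : y - θ < π := by linarith
  have hsinyθ : 0 < Real.sin (y - θ) := Real.sin_pos_of_pos_of_lt_pi h0yθ hyθπ
  have hsiny : 0 < Real.sin y := Real.sin_pos_of_pos_of_lt_pi hy0 hyπ
  -- values at 0
  have ht0 : aT y c 0 = Real.cos y := by unfold aT; simp
  have hA0 : aA y c 0 = y := by
    unfold aA; rw [ht0, Real.arccos_cos hy0.le hyπ.le]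
  have hf0 : aF q y c 0 = y ^ (-q) := by unfold aF; rw [hA0]
  have hu0 : aU y c 0 = Real.sin y := by
    unfold aU
    rw [ht0, show 1 - Real.cos y ^ 2 = Real.sin y ^ 2 by rw [Real.sin_sq], Real.sqrt_sq hsiny.le]
  have ht'0 : aT' y c 0 = Real.sin y * c := by unfold aT'; simp
  have hypow : 0 < y ^ (q+1) := Real.rpow_pos_of_pos hy0 _
  have hF10 : aF1 q y c 0 = q * c / y ^ (q + 1) := by
    unfold aF1
    rw [ht'0, hu0, hA0, show (-q - 1 : ℝ) = -(q+1) by ring, Real.rpow_neg hy0.le]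
    field_simp
  -- key inequality, stated abstractly
  have key : |aF q y c θ - aF q y c 0 - aF1 q y c 0 * θ|
      ≤ 12 * θ ^ 2 *
        (1 / |y - θ| ^ (q + 2) + 1 / (|y - θ| ^ (q + 1) * Real.sin (y - θ))) := by
    rw [abs_of_pos h0yθ]
    have e1 : 1 / (y - θ) ^ (q + 2) = (y - θ) ^ (-q - 2) := by
      rw [show (-q - 2 : ℝ) = -(q+2) by ring, Real.rpow_neg h0yθ.le, one_div]
    have e2 : 1 / ((y - θ) ^ (q + 1) * Real.sin (y - θ))
        = (y - θ) ^ (-q - 1) / Real.sin (y - θ) := by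
      rw [show (-q - 1 : ℝ) = -(q+1) by ring, Real.rpow_neg h0yθ.le, one_div, mul_inv,
        ← div_eq_mul_inv]
    rw [e1, e2]
    have hX : 0 < (y - θ) ^ (-q - 2) := Real.rpow_pos_of_pos h0yθ _
    have hY : 0 < (y - θ) ^ (-q - 1) := Real.rpow_pos_of_pos h0yθ _
    have hZ : 0 < (y - θ) ^ (-q - 1) / Real.sin (y - θ) := div_pos hY hsinyθ
    by_cases hcase : y ≤ π - 2*θ
    · -- Case 1 : Taylor with second derivative
      have hfacts : ∀ s ∈ Icc (0:ℝ) θ,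
          y - θ ≤ aA y c s ∧ 0 < aA y c s ∧
            2/(3*π) * Real.sin (y - θ) ≤ aU y c s := by
        intro s hs
        obtain ⟨hs0, hsθ⟩ := hs
        obtain ⟨hb1, hb2⟩ := aA_bounds hθ0 hy1 hy2 hc1 hc2 hs0 hsθ
        have hA1 : y - θ ≤ aA y c s := by linarith
        refine ⟨hA1, by linarith, ?_⟩
        rw [aU_eq_sin]
        have hmin : min (Real.sin (y - θ)) (Real.sin (y + θ)) ≤ Real.sin (aA y c s) :=
          sin_min_le (by linarith) (by linarith) (by linarith) (by linarith)
        have h23 : 2/(3*π) * Real.sin (y - θ) ≤ min (Real.sin (y - θ)) (Real.sin (y + θ)) := by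
          have h2pi : 2/(3*π) ≤ 1 := by
            rw [div_le_one (by positivity)]; linarith
          refine le_min (by nlinarith [hsinyθ.le]) ?_
          by_cases hhalf : y + θ ≤ π/2
          · have hmono : Real.sin (y - θ) ≤ Real.sin (y + θ) :=
              Real.strictMonoOn_sin.monotoneOn ⟨by linarith, by linarith⟩
                ⟨by linarith, hhalf⟩ (by linarith)
            nlinarith
          · push_neg at hhalf
            have hu0' : θ ≤ π - (y + θ) := by linarith
            have hu1 : π - (y + θ) ≤ π/2 := by linarith
            have h1 : 2/π * (π - (y + θ)) ≤ Real.sin (y + θ) := by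
              have := Real.mul_le_sin (x := π - (y + θ)) (by linarith) hu1
              rwa [Real.sin_pi_sub] at this
            have h2 : Real.sin (y - θ) ≤ π - (y + θ) + 2*θ := by
              have h3 : Real.sin (y - θ) = Real.sin (π - (y - θ)) := (Real.sin_pi_sub _).symm
              rw [h3]
              have := Real.sin_le (x := π - (y - θ)) (by linarith)
              linarith
            rw [div_mul_eq_mul_div, div_le_iff₀ Real.pi_pos] at h1
            rw [div_mul_eq_mul_div, div_le_iff₀ (by positivity : (0:ℝ) < 3*π)]
            linarith
        linarith
      have hder : ∀ s ∈ Icc (0:ℝ) θ, 0 < aU y c s ∧ 0 < aA y c s := by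
        intro s hs
        obtain ⟨_, hA, hu⟩ := hfacts s hs
        exact ⟨lt_of_lt_of_le (mul_pos (by positivity) hsinyθ) hu, hA⟩
      have hd1 : ∀ s ∈ Icc (0:ℝ) θ, HasDerivAt (aF q y c) (aF1 q y c s) s := by
        intro s hs
        obtain ⟨hu, hA⟩ := hder s hs
        exact hasDerivAt_aF hu hA
      have hd2 : ∀ s ∈ Icc (0:ℝ) θ, HasDerivAt (aF1 q y c) (aF2 q y c s) s := by
        intro s hs
        obtain ⟨hu, hA⟩ := hder s hs
        exact hasDerivAt_aF1 hu hA
      set M : ℝ := q*(q+1)*(y - θ) ^ (-q - 2) + 3*π*q*((y - θ) ^ (-q - 1)/Real.sin (y - θ))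
        with hMdef
      have hM : ∀ s ∈ Icc (0:ℝ) θ, |aF2 q y c s| ≤ M := by
        intro s hs
        obtain ⟨hA1, hA, hu23⟩ := hfacts s hs
        have hu : 0 < aU y c s := lt_of_lt_of_le (mul_pos (by positivity) hsinyθ) hu23
        have htsq := tsq_bound y c s hcsq
        have husq := aU_sq hu
        have ht : |aT y c s| ≤ 1 := by
          rw [← sq_le_one_iff_abs_le_one]
          nlinarith [sq_nonneg (aT' y c s)]
        have ht' : (aT' y c s) ^ 2 ≤ (aU y c s) ^ 2 := by
          rw [husq]; nlinarith [sq_nonneg (aT y c s)]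
        have hb := aF2_bound hq0 hu hA ht ht'
        have hP2le : (aA y c s) ^ (-q-2) ≤ (y - θ) ^ (-q-2) :=
          Real.rpow_le_rpow_of_nonpos h0yθ hA1 (by linarith)
        have hP1le : (aA y c s) ^ (-q-1) ≤ (y - θ) ^ (-q-1) :=
          Real.rpow_le_rpow_of_nonpos h0yθ hA1 (by linarith)
        have hdivle : (aA y c s) ^ (-q-1) / aU y c s
            ≤ (y - θ) ^ (-q-1) / (2/(3*π) * Real.sin (y - θ)) :=
          div_le_div₀ hY.le hP1le (mul_pos (by positivity) hsinyθ) hu23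
        have hP1pos : 0 < (aA y c s) ^ (-q-1) := Real.rpow_pos_of_pos hA _
        have heq : (y - θ) ^ (-q-1) / (2/(3*π) * Real.sin (y - θ))
            = (3*π/2) * ((y - θ) ^ (-q-1) / Real.sin (y - θ)) := by
          field_simp
        rw [heq] at hdivle
        calc |aF2 q y c s|
            ≤ q*(q+1)*(aA y c s) ^ (-q-2) + 2*q*(aA y c s) ^ (-q-1)/aU y c s := hb
          _ ≤ M := by
              rw [hMdef]
              have h1 : q*(q+1)*(aA y c s) ^ (-q-2) ≤ q*(q+1)*(y - θ) ^ (-q-2) :=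
                mul_le_mul_of_nonneg_left hP2le (by nlinarith)
              have h2 : 2*q*(aA y c s) ^ (-q-1)/aU y c s
                  ≤ 3*π*q*((y - θ) ^ (-q-1)/Real.sin (y - θ)) := by
                rw [mul_div_assoc]
                calc 2*q*((aA y c s) ^ (-q-1)/aU y c s)
                    ≤ 2*q*((3*π/2) * ((y - θ) ^ (-q-1)/Real.sin (y - θ))) :=
                      mul_le_mul_of_nonneg_left hdivle (by linarith)
                  _ = 3*π*q*((y - θ) ^ (-q-1)/Real.sin (y - θ)) := by ring
              linarith
      have htay := taylor2 hθ0.le hd1 hd2 hM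
      have c1 : q*(q+1) ≤ 12 := by nlinarith
      have c2 : 3*π*q ≤ 12 := by nlinarith
      calc |aF q y c θ - aF q y c 0 - aF1 q y c 0 * θ| ≤ M * θ ^ 2 := htay
        _ ≤ 12 * θ ^ 2 * ((y - θ) ^ (-q - 2) + (y - θ) ^ (-q - 1) / Real.sin (y - θ)) := by
            rw [hMdef]
            have t1 : 0 ≤ (12 - q*(q+1)) * ((y - θ) ^ (-q - 2) * θ^2) :=
              mul_nonneg (by linarith) (mul_nonneg hX.le (sq_nonneg θ))
            have t2 : 0 ≤ (12 - 3*π*q) * ((y - θ) ^ (-q - 1) / Real.sin (y - θ) * θ^2) :=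
              mul_nonneg (by linarith) (mul_nonneg hZ.le (sq_nonneg θ))
            linarith [t1, t2]
    · -- Case 2 : y close to π - θ, crude Lipschitz bound
      push_neg at hcase
      have hcont : ContinuousOn (aF q y c) (Icc 0 θ) := by
        intro s hs
        have hs1 := hs.1
        have hs2 := hs.2
        obtain ⟨hb1, _⟩ := aA_bounds hθ0 hy1 hy2 hc1 hc2 hs1 hs2
        have hA : 0 < aA y c s := by linarith
        have hct : ContinuousAt (aT y c) s := by
          unfold aT; fun_prop
        have hca : ContinuousAt (aA y c) s := (Real.continuous_arccos.continuousAt).comp hct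
        have := (Real.continuousAt_rpow_const (aA y c s) (-q) (Or.inl hA.ne')).comp hca
        exact this.continuousWithinAt
      have hderiv : ∀ s ∈ Ico (0:ℝ) θ, HasDerivWithinAt (aF q y c) (aF1 q y c s) (Ici s) s := by
        intro s hs
        have hs1 := hs.1
        have hs2 := hs.2
        obtain ⟨hb1, hb2⟩ := aA_bounds hθ0 hy1 hy2 hc1 hc2 hs1 hs2.le
        have hA : 0 < aA y c s := by linarith
        have hAπ : aA y c s < π := by
          have : y + s < π := by linarith
          linarith
        have hu : 0 < aU y c s := by
          rw [aU_eq_sin]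
          exact Real.sin_pos_of_pos_of_lt_pi hA hAπ
        exact (hasDerivAt_aF hu hA).hasDerivWithinAt
      have hL : ∀ s ∈ Ico (0:ℝ) θ, ‖aF1 q y c s‖ ≤ q * (y - θ) ^ (-q-1) := by
        intro s hs
        have hs1 := hs.1
        have hs2 := hs.2
        obtain ⟨hb1, hb2⟩ := aA_bounds hθ0 hy1 hy2 hc1 hc2 hs1 hs2.le
        have hA : 0 < aA y c s := by linarith
        have hAπ : aA y c s < π := by
          have : y + s < π := by linarith
          linarith
        have hu : 0 < aU y c s := by
          rw [aU_eq_sin]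
          exact Real.sin_pos_of_pos_of_lt_pi hA hAπ
        have htsq := tsq_bound y c s hcsq
        have husq := aU_sq hu
        have ht' : (aT' y c s) ^ 2 ≤ (aU y c s) ^ 2 := by
          rw [husq]; nlinarith [sq_nonneg (aT y c s)]
        have h1 := aF1_bound hq0 hu hA ht'
        have hP1le : (aA y c s) ^ (-q-1) ≤ (y - θ) ^ (-q-1) :=
          Real.rpow_le_rpow_of_nonpos h0yθ (by linarith) (by linarith)
        rw [Real.norm_eq_abs]
        calc |aF1 q y c s| ≤ q * (aA y c s) ^ (-q-1) := h1
          _ ≤ q * (y - θ) ^ (-q-1) := mul_le_mul_of_nonneg_left hP1le hq0.le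
      have hmvt := norm_image_sub_le_of_norm_deriv_right_le_segment hcont hderiv hL θ
        ⟨hθ0.le, le_refl θ⟩
      rw [Real.norm_eq_abs, sub_zero] at hmvt
      -- bound on the linear term
      have hylb : (y:ℝ) ^ (-q-1) ≤ (y - θ) ^ (-q-1) :=
        Real.rpow_le_rpow_of_nonpos h0yθ (by linarith) (by linarith)
      have hyneg : y ^ (-q-1) = (y ^ (q+1))⁻¹ := by
        rw [show (-q - 1 : ℝ) = -(q+1) by ring, Real.rpow_neg hy0.le]
      have hlin : |aF1 q y c 0 * θ| ≤ q * (y - θ) ^ (-q-1) * θ := by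
        rw [hF10, abs_mul, abs_of_pos hθ0]
        have hcabs : |c| ≤ 1 := abs_le.mpr ⟨hc1, hc2⟩
        have habs1 : |q * c / y ^ (q+1)| = q * |c| / y ^ (q+1) := by
          rw [abs_div, abs_mul, abs_of_pos hq0, abs_of_pos hypow]
        have : |q * c / y ^ (q+1)| ≤ q * (y - θ) ^ (-q-1) := by
          rw [habs1]
          calc q * |c| / y ^ (q+1) ≤ q * 1 / y ^ (q+1) := by
                apply div_le_div_of_nonneg_right ?_ hypow.le
                nlinarith [abs_nonneg c]
            _ = q * y ^ (-q-1) := by rw [hyneg]; ring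
            _ ≤ q * (y - θ) ^ (-q-1) := mul_le_mul_of_nonneg_left hylb hq0.le
        exact mul_le_mul_of_nonneg_right this hθ0.le
      have hsin3 : Real.sin (y - θ) ≤ 3*θ := by
        have h3 : Real.sin (y - θ) = Real.sin (π - (y - θ)) := (Real.sin_pi_sub _).symm
        rw [h3]
        have := Real.sin_le (x := π - (y - θ)) (by linarith)
        linarith
      have htot : |aF q y c θ - aF q y c 0 - aF1 q y c 0 * θ|
          ≤ 2 * q * (y - θ) ^ (-q-1) * θ := by
        have := abs_sub (aF q y c θ - aF q y c 0) (aF1 q y c 0 * θ)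
        calc |aF q y c θ - aF q y c 0 - aF1 q y c 0 * θ|
            ≤ |aF q y c θ - aF q y c 0| + |aF1 q y c 0 * θ| := abs_sub _ _
          _ ≤ q * (y - θ) ^ (-q-1) * (θ - 0) + q * (y - θ) ^ (-q-1) * θ := by
              linarith [hmvt, hlin]
          _ = 2 * q * (y - θ) ^ (-q-1) * θ := by ring
      calc |aF q y c θ - aF q y c 0 - aF1 q y c 0 * θ|
          ≤ 2 * q * (y - θ) ^ (-q-1) * θ := htot
        _ ≤ 12 * θ ^ 2 * ((y - θ) ^ (-q - 2) + (y - θ) ^ (-q - 1) / Real.sin (y - θ)) := by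
            rw [mul_add]
            have h1 : 2 * q * (y - θ) ^ (-q-1) * θ
                ≤ 12 * θ ^ 2 * ((y - θ) ^ (-q - 1) / Real.sin (y - θ)) := by
              rw [← mul_div_assoc, le_div_iff₀ hsinyθ]
              have hstep := mul_le_mul_of_nonneg_left hsin3
                (mul_nonneg (mul_nonneg (by linarith : (0:ℝ) ≤ 2*q) hY.le) hθ0.le)
              have t1 : 0 ≤ (12 - 6*q) * ((y - θ) ^ (-q-1) * θ^2) :=
                mul_nonneg (by linarith) (mul_nonneg hY.le (sq_nonneg θ))
              nlinarith [t1, hstep]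
            have t0 : 0 ≤ 12 * θ^2 * (y - θ) ^ (-q - 2) :=
              mul_nonneg (mul_nonneg (by norm_num) (sq_nonneg θ)) hX.le
            linarith [h1, t0]
  rw [hf0, hF10] at key
  exact key
end

section
/- For q ∈ (0,2) and every t ∈ ℝ, the Kummer-type identity 1 − e^{−t} ₁F₁(1 − q/2; 1; t) = (qt/2) · ₂F₂(q/2 + 1, 1; 2, 2; −t) holds, where ₁F₁ and ₂F₂ are the confluent and generalized hypergeometric series. -/
open Real Set

/-- The rising factorial `(a)_k = a (a+1) ⋯ (a+k−1)`. -/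
def risingFactorial (a : ℝ) (k : ℕ) : ℝ := ∏ i ∈ Finset.range k, (a + i)

lemma rf_zero (a : ℝ) : risingFactorial a 0 = 1 := by simp [risingFactorial]

lemma rf_succ (a : ℝ) (k : ℕ) :
    risingFactorial a (k+1) = risingFactorial a k * (a + k) := by
  simp [risingFactorial, Finset.prod_range_succ]

lemma rf_succ_left (a : ℝ) (k : ℕ) :
    risingFactorial a (k+1) = a * risingFactorial (a+1) k := by
  rw [risingFactorial, Finset.prod_range_succ']
  simp only [Nat.cast_zero, add_zero]
  rw [mul_comm, risingFactorial]
  congr 1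
  exact Finset.prod_congr rfl fun i _ => by push_cast; ring

lemma rf_one (k : ℕ) : risingFactorial 1 k = k.factorial := by
  induction k with
  | zero => simp [rf_zero]
  | succ k ih => rw [rf_succ, ih, Nat.factorial_succ]; push_cast; ring

lemma rf_two (k : ℕ) : risingFactorial 2 k = (k+1).factorial := by
  induction k with
  | zero => simp [rf_zero]
  | succ k ih =>
    rw [rf_succ, ih, Nat.factorial_succ (k+1)]
    push_cast; ring

lemma abs_rf_le (a : ℝ) (k : ℕ) : |risingFactorial a k| ≤ (|a|+1)^k * k.factorial := by
  induction k with
  | zero => simp [rf_zero]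
  | succ k ih =>
    rw [rf_succ, abs_mul, pow_succ, Nat.factorial_succ]
    have h1 : |a + (k:ℝ)| ≤ (|a|+1) * (k+1) := by
      calc |a + (k:ℝ)| ≤ |a| + k := by
            refine (abs_add_le _ _).trans ?_
            simp [Nat.abs_cast]
          _ ≤ (|a|+1) * (k+1) := by nlinarith [abs_nonneg a]
    calc |risingFactorial a k| * |a + (k:ℝ)| ≤ ((|a|+1)^k * k.factorial) * ((|a|+1)*(k+1)) := by
          apply mul_le_mul ih h1 (abs_nonneg _)
          positivity
      _ = (|a|+1)^k * (|a|+1) * (((k:ℝ)+1) * k.factorial) := by ring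
      _ = (|a|+1)^k * (|a|+1) * ((k+1).factorial : ℝ) := by push_cast [Nat.factorial_succ]; ring

lemma summable_norm_aux (a t : ℝ) :
    Summable fun k => ‖risingFactorial a k * t ^ k / ((k.factorial:ℝ) * k.factorial)‖ := by
  have hb : Summable (fun k : ℕ => ((|a|+1)*|t|)^k / k.factorial) :=
    Real.summable_pow_div_factorial _
  have hle : ∀ k : ℕ, ‖risingFactorial a k * t ^ k / ((k.factorial:ℝ) * k.factorial)‖ ≤
      ((|a|+1)*|t|)^k / k.factorial := fun k => ?bound
  case _ => exact Summable.of_nonneg_of_le (fun k => norm_nonneg _) hle hb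
  case bound =>
  have hk : (0:ℝ) < k.factorial := by exact_mod_cast k.factorial_pos
  rw [Real.norm_eq_abs, abs_div, abs_mul, abs_pow,
    abs_of_pos (show (0:ℝ) < (k.factorial:ℝ) * k.factorial by positivity), mul_pow]
  rw [show ((|a|+1)^k * |t|^k / (k.factorial:ℝ)) =
      ((|a|+1)^k * k.factorial) * |t|^k / ((k.factorial:ℝ) * k.factorial) by
    field_simp]
  gcongr
  exact abs_rf_le a k

lemma summable_aux (a t : ℝ) :
    Summable fun k => risingFactorial a k * t ^ k / ((k.factorial:ℝ) * k.factorial) :=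
  (summable_norm_aux a t).of_norm

lemma descSm_prod (x : ℝ) (n : ℕ) :
    (descPochhammer ℤ n).smeval x = ∏ i ∈ Finset.range n, (x - i) := by
  induction n with
  | zero => simp [descPochhammer_zero, Polynomial.smeval_one]
  | succ n ih =>
    rw [descPochhammer_succ_right, Polynomial.smeval_mul, ih, Finset.prod_range_succ,
      Polynomial.smeval_sub, Polynomial.smeval_X, Polynomial.smeval_natCast]
    simp

lemma descSm_neg (a : ℝ) (k : ℕ) :
    (descPochhammer ℤ k).smeval (-a) = (-1)^k * risingFactorial a k := by
  induction k with
  | zero => simp [descSm_prod, rf_zero]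
  | succ k ih =>
    rw [descSm_prod, Finset.prod_range_succ, ← descSm_prod, ih, rf_succ, pow_succ]
    ring

lemma descSm_nat (n j : ℕ) (h : j ≤ n) :
    (descPochhammer ℤ j).smeval ((n:ℝ)) * ((n-j).factorial : ℝ) = (n.factorial : ℝ) := by
  induction j with
  | zero => simp [descSm_prod]
  | succ j ih =>
    have hj : j ≤ n := Nat.le_of_succ_le h
    rw [descSm_prod, Finset.prod_range_succ, ← descSm_prod]
    have hc : (n:ℝ) - j = ((n - j : ℕ) : ℝ) := by
      have := Nat.cast_sub hj (R := ℝ); linarith [this]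
    have hf : ((n - j).factorial : ℝ) = ((n-j:ℕ):ℝ) * ((n - (j+1)).factorial : ℝ) := by
      have h2 : (n - (j+1)) + 1 = n - j := by omega
      rw [← h2, Nat.factorial_succ, Nat.cast_mul, h2]
    calc (descPochhammer ℤ j).smeval ((n:ℝ)) * ((n:ℝ) - j) * ((n-(j+1)).factorial : ℝ)
        = (descPochhammer ℤ j).smeval ((n:ℝ)) * (((n-j:ℕ):ℝ) * ((n-(j+1)).factorial : ℝ)) := by
          rw [hc]; ring
      _ = (descPochhammer ℤ j).smeval ((n:ℝ)) * ((n-j).factorial : ℝ) := by rw [← hf]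
      _ = (n.factorial : ℝ) := ih hj

lemma descSm_left (a : ℝ) (n : ℕ) :
    (descPochhammer ℤ n).smeval ((n:ℝ) - a) = risingFactorial (1-a) n := by
  rw [descSm_prod, risingFactorial, ← Finset.prod_range_reflect]
  refine Finset.prod_congr rfl fun j hj => ?_
  have hj' : j < n := Finset.mem_range.mp hj
  have : ((n - 1 - j : ℕ) : ℝ) = (n:ℝ) - 1 - j := by
    have h1 : ((n - 1 - j : ℕ)) + (1 + j) = n := by omega
    have := congrArg (fun m : ℕ => (m : ℝ)) h1
    push_cast at this
    linarith
  rw [this]; ring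

lemma core (a : ℝ) (n : ℕ) :
    ∑ kl ∈ Finset.HasAntidiagonal.antidiagonal n,
      risingFactorial a kl.1 * (-1:ℝ)^kl.2 /
        ((kl.1.factorial:ℝ) * kl.1.factorial * kl.2.factorial)
    = (-1)^n * risingFactorial (1-a) n / ((n.factorial:ℝ) * n.factorial) := by
  have hv := Ring.descPochhammer_smeval_add (R := ℝ) (r := -a) (s := (n:ℝ)) n (Commute.all _ _)
  rw [show (-a + (n:ℝ)) = (n:ℝ) - a by ring, descSm_left] at hv
  rw [hv, Finset.mul_sum, Finset.sum_div]
  refine Finset.sum_congr rfl fun ij hij => ?_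
  obtain ⟨k, j⟩ := ij
  have hkj : k + j = n := Finset.HasAntidiagonal.mem_antidiagonal.mp hij
  have hk : k ≤ n := by omega
  have hj : j ≤ n := by omega
  have hk0 : (k.factorial:ℝ) ≠ 0 := by exact_mod_cast k.factorial_ne_zero
  have hj0 : (j.factorial:ℝ) ≠ 0 := by exact_mod_cast j.factorial_ne_zero
  have hn0 : (n.factorial:ℝ) ≠ 0 := by exact_mod_cast n.factorial_ne_zero
  have hdval : (descPochhammer ℤ j).smeval ((n:ℝ)) = (n.factorial:ℝ) / k.factorial := by
    rw [eq_div_iff hk0]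
    have := descSm_nat n j hj
    rwa [show n - j = k by omega] at this
  have hcf : ((n.choose k : ℕ):ℝ) * k.factorial * j.factorial = n.factorial := by
    have := Nat.choose_mul_factorial_mul_factorial hk
    rw [show n - k = j by omega] at this
    exact_mod_cast this
  have hsign : ((-1:ℝ))^n = (-1)^k * (-1)^j := by rw [← pow_add, hkj]
  simp only
  rw [descSm_neg, hdval, hsign]
  have hcc : ((-1:ℝ))^k * (-1)^k = 1 := by
    rw [← pow_add, ← two_mul, pow_mul]; norm_num
  field_simp
  linear_combination (-(risingFactorial a k)) * hcf +
    (-((n.choose k : ℕ) * risingFactorial a k *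
      (k.factorial:ℝ) * (j.factorial:ℝ))) * hcc

lemma cauchy_coeff (a t : ℝ) (n : ℕ) :
    ∑ kl ∈ Finset.HasAntidiagonal.antidiagonal n, ((-t)^kl.1 / (kl.1.factorial:ℝ)) *
      (risingFactorial a kl.2 * t^kl.2 / ((kl.2.factorial:ℝ) * kl.2.factorial))
    = risingFactorial (1-a) n * (-t)^n / ((n.factorial:ℝ) * n.factorial) := by
  rw [← Finset.Nat.sum_antidiagonal_swap]
  have step : ∀ kl ∈ Finset.HasAntidiagonal.antidiagonal n,
      ((-t)^(kl.swap.1) / ((kl.swap.1).factorial:ℝ)) *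
        (risingFactorial a kl.swap.2 * t^kl.swap.2 /
          (((kl.swap.2).factorial:ℝ) * (kl.swap.2).factorial))
      = t^n * (risingFactorial a kl.1 * (-1:ℝ)^kl.2 /
          ((kl.1.factorial:ℝ) * kl.1.factorial * kl.2.factorial)) := by
    intro kl hkl
    obtain ⟨k, j⟩ := kl
    have hkj : k + j = n := Finset.HasAntidiagonal.mem_antidiagonal.mp hkl
    simp only [Prod.swap_prod_mk]
    have ht : t ^ k * t ^ j = t ^ n := by rw [← pow_add, hkj]
    rw [neg_pow]
    have hk0 : (k.factorial:ℝ) ≠ 0 := by exact_mod_cast k.factorial_ne_zero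
    have hj0 : (j.factorial:ℝ) ≠ 0 := by exact_mod_cast j.factorial_ne_zero
    field_simp
    linear_combination (risingFactorial a k) * ht
  rw [Finset.sum_congr rfl step, ← Finset.mul_sum, core, neg_pow]
  ring

/-- For `q ∈ (0,2)` and every `t ∈ ℝ`, the Kummer-type identity
`1 − e^{−t} ₁F₁(1−q/2; 1; t) = (qt/2) ₂F₂(q/2+1, 1; 2, 2; −t)` holds, where
`₁F₁(a; b; t) = ∑_k ((a)_k/(b)_k) t^k/k!` and
`₂F₂(a₁,a₂; b₁,b₂; t) = ∑_k ((a₁)_k (a₂)_k/((b₁)_k (b₂)_k)) t^k/k!`. -/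
theorem kummer_identity (q : ℝ) (hq : q ∈ Ioo (0:ℝ) 2) (t : ℝ) :
    1 - Real.exp (-t) *
        ∑' k : ℕ, (risingFactorial (1 - q / 2) k / risingFactorial 1 k) *
          t ^ k / (Nat.factorial k : ℝ)
      = (q * t / 2) *
        ∑' k : ℕ,
          (risingFactorial (q / 2 + 1) k * risingFactorial 1 k /
            (risingFactorial 2 k * risingFactorial 2 k)) *
            (-t) ^ k / (Nat.factorial k : ℝ) := by
  have hfg : (∑' k : ℕ, (risingFactorial (1 - q/2) k / risingFactorial 1 k) * t ^ k /
        (Nat.factorial k : ℝ))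
      = ∑' k : ℕ, risingFactorial (1-q/2) k * t ^ k / ((k.factorial:ℝ) * k.factorial) := by
    refine tsum_congr fun k => ?_
    rw [rf_one]
    have hk0 : (k.factorial:ℝ) ≠ 0 := by exact_mod_cast k.factorial_ne_zero
    field_simp
  have hexp : Real.exp (-t) = ∑' n : ℕ, (-t)^n / (n.factorial:ℝ) := by
    rw [Real.exp_eq_exp_ℝ, NormedSpace.exp_eq_tsum_div]
  have hgnorm : Summable (fun n : ℕ => ‖(-t)^n / (n.factorial:ℝ)‖) := by
    have he : (fun n : ℕ => ‖(-t)^n / (n.factorial:ℝ)‖) = fun n => |t|^n / n.factorial := by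
      funext n; rw [Real.norm_eq_abs, abs_div, abs_pow, abs_neg, Nat.abs_cast]
    rw [he]; exact Real.summable_pow_div_factorial _
  rw [hfg, hexp,
    tsum_mul_tsum_eq_tsum_sum_antidiagonal_of_summable_norm hgnorm (summable_norm_aux _ t),
    tsum_congr (cauchy_coeff (1-q/2) t)]
  have hq2 : (1 : ℝ) - (1 - q/2) = q/2 := by ring
  simp only [hq2]
  rw [Summable.tsum_eq_zero_add ((summable_norm_aux (q/2) (-t)).of_norm)]
  rw [show risingFactorial (q/2) 0 * (-t)^0 /
      ((Nat.factorial 0:ℝ) * Nat.factorial 0) = 1 by simp [rf_zero]]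
  rw [← tsum_mul_left]
  have hterm : ∀ k : ℕ, (q * t / 2) *
      ((risingFactorial (q/2+1) k * risingFactorial 1 k /
        (risingFactorial 2 k * risingFactorial 2 k)) * (-t)^k / (Nat.factorial k : ℝ))
      = -(risingFactorial (q/2) (k+1) * (-t)^(k+1) /
          (((k+1).factorial:ℝ) * (k+1).factorial)) := by
    intro k
    rw [rf_one, rf_two, rf_succ_left, pow_succ]
    have hk0 : (k.factorial:ℝ) ≠ 0 := by exact_mod_cast k.factorial_ne_zero
    have hk1 : ((k+1).factorial:ℝ) ≠ 0 := by exact_mod_cast (k+1).factorial_ne_zero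
    field_simp
  rw [tsum_congr hterm, tsum_neg]
  ring
end

section
/- Let C : [0,π] → ℝ be a continuous isotropic correlation function on the circle S¹ of an isotropic random field, and suppose C has fractal index α, i.e., lim_{θ↓0} (C(0) − C(θ))/θ^α = b for some b > 0. Then α ≤ 2. -/
open Real Set Filter

/-- Let `C : ℝ → ℝ` be continuous, even, `2π`-periodic and positive semidefinite
(so that its restriction to `[0,π]` is an isotropic correlation function on the
circle `S¹`), with `C 0 = 1`.  If `C` has fractal index `α > 0`, i.e.
`(C 0 − C θ)/θ^α → b > 0` as `θ ↓ 0`, then `α ≤ 2`. -/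
theorem fractal_index_le_two (C : ℝ → ℝ)
    (hcont : Continuous C)
    (heven : ∀ θ : ℝ, C (-θ) = C θ)
    (hper : ∀ θ : ℝ, C (θ + 2 * π) = C θ)
    (hC0 : C 0 = 1)
    (hpsd : ∀ (n : ℕ) (x : Fin n → ℝ) (c : Fin n → ℝ),
      0 ≤ ∑ i, ∑ j, c i * c j * C (x i - x j))
    (α : ℝ) (hα : 0 < α) (b : ℝ) (hb : 0 < b)
    (hfrac : Tendsto (fun θ => (C 0 - C θ) / θ ^ α) (nhdsWithin 0 (Ioi 0)) (nhds b)) :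
    α ≤ 2 := by
  -- Second difference inequality from positive semidefiniteness
  have key : ∀ θ : ℝ, C 0 - C (2 * θ) ≤ 4 * (C 0 - C θ) := by
    intro θ
    have h := hpsd 3 ![0, θ, 2 * θ] ![1, -2, 1]
    simp only [Fin.sum_univ_three, Matrix.cons_val_zero, Matrix.cons_val_one,
      Matrix.head_cons, Matrix.cons_val_two, Matrix.tail_cons] at h
    have e1 : (0 : ℝ) - θ = -θ := by ring
    have e2 : θ - 2 * θ = -θ := by ring
    have e3 : (0 : ℝ) - 2 * θ = -(2 * θ) := by ring
    have e4 : θ - 0 = θ := by ring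
    have e5 : 2 * θ - 0 = 2 * θ := by ring
    have e6 : 2 * θ - θ = θ := by ring
    rw [e1, e2, e3, e4, e5, e6, heven θ, heven (2 * θ)] at h
    simp only [sub_self] at h
    nlinarith [h]
  -- the doubling map preserves 𝓝[>] 0
  have hdouble : Tendsto (fun θ : ℝ => 2 * θ) (nhdsWithin 0 (Ioi 0)) (nhdsWithin 0 (Ioi 0)) := by
    apply tendsto_nhdsWithin_of_tendsto_nhds_of_eventually_within
    · have : Tendsto (fun θ : ℝ => 2 * θ) (nhds 0) (nhds (2 * 0)) :=
        (continuous_const.mul continuous_id).tendsto 0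
      simpa using this.mono_left nhdsWithin_le_nhds
    · filter_upwards [self_mem_nhdsWithin] with θ (hθ : 0 < θ)
      exact mul_pos two_pos hθ
  -- limit of (C 0 - C (2θ))/θ^α is 2^α * b
  have h1 : Tendsto (fun θ : ℝ => (C 0 - C (2 * θ)) / θ ^ α)
      (nhdsWithin 0 (Ioi 0)) (nhds ((2 : ℝ) ^ α * b)) := by
    have comp := (hfrac.comp hdouble).const_mul ((2 : ℝ) ^ α)
    apply comp.congr'
    filter_upwards [self_mem_nhdsWithin] with θ (hθ : 0 < θ)
    have hpow : (2 * θ) ^ α = (2 : ℝ) ^ α * θ ^ α :=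
      Real.mul_rpow (by norm_num) hθ.le
    have hθα : (0 : ℝ) < θ ^ α := Real.rpow_pos_of_pos hθ α
    simp only [Function.comp]
    rw [hpow]
    field_simp
  -- limit of 4 * (C 0 - C θ)/θ^α is 4 * b
  have h2 : Tendsto (fun θ : ℝ => 4 * ((C 0 - C θ) / θ ^ α))
      (nhdsWithin 0 (Ioi 0)) (nhds (4 * b)) := hfrac.const_mul 4
  -- compare
  have hle : (2 : ℝ) ^ α * b ≤ 4 * b := by
    refine le_of_tendsto_of_tendsto h1 h2 ?_
    filter_upwards [self_mem_nhdsWithin] with θ (h : 0 < θ)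
    have hθα : (0 : ℝ) < θ ^ α := Real.rpow_pos_of_pos h α
    rw [← mul_div_assoc]
    gcongr
    exact key θ
  have h2α : (2 : ℝ) ^ α ≤ (2 : ℝ) ^ (2 : ℝ) := by
    have := (mul_le_mul_iff_of_pos_right hb).mp hle
    calc (2 : ℝ) ^ α ≤ 4 := this
      _ = (2 : ℝ) ^ (2 : ℝ) := by
          rw [show ((2:ℝ):ℝ) = ((2:ℕ):ℝ) by norm_num]
          rw [Real.rpow_natCast]; norm_num
  exact (Real.rpow_le_rpow_left_iff (by norm_num : (1:ℝ) < 2)).mp h2α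
end
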